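/- (Hall) For every real number x there exist real numbers u and v such that x = u + v and every regular continued fraction partial quotient b_i of u with i ≥ 1 satisfies b_i ≤ 4, and every regular continued fraction partial quotient b_i of v with i ≥ 1 satisfies b_i ≤ 4 (that is, ℝ = RCF_4 + RCF_4). -/

import Mathlib

/-- RCF iterates: `x₀ = x`, `x_{i+1} = 1/(x_i - ⌊x_i⌋)`. -/
noncomputable def rcfX (x : ℝ) : ℕ → ℝ
  | 0 => x
  | n + 1 => 1 / (rcfX x n - ⌊rcfX x n⌋)

/-- The `i`-th RCF partial quotient of `x`. -/
noncomputable def rcfDigit (x : ℝ) (i : ℕ) : ℤ := ⌊rcfX x i⌋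

/-- The `i`-th RCF partial quotient is genuinely defined: the algorithm has not
terminated before step `i`. -/
def rcfDefined (x : ℝ) (i : ℕ) : Prop :=
  ∀ m, m < i → rcfX x m ≠ (rcfDigit x m : ℝ)

/-- `RCFset r`: the reals all of whose RCF partial quotients `b_i` with `i ≥ 1`
satisfy `b_i ≤ r`. -/
def RCFset (r : ℤ) : Set ℝ :=
  {x | ∀ i : ℕ, 1 ≤ i → rcfDefined x i → rcfDigit x i ≤ r}

namespace Hall

noncomputable def sq2 : ℝ := Real.sqrt 2

lemma sq2_sq : sq2 ^ 2 = 2 := Real.sq_sqrt (by norm_num)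
lemma sq2_nonneg : 0 ≤ sq2 := Real.sqrt_nonneg 2
lemma sq2_lb : (1.41421356 : ℝ) < sq2 := by
  nlinarith [sq2_sq, sq2_nonneg]
lemma sq2_ub : sq2 < (1.41421357 : ℝ) := by
  nlinarith [sq2_sq, sq2_nonneg]

noncomputable def mm : ℝ := (sq2 - 1) / 2
noncomputable def MM : ℝ := 2 * (sq2 - 1)

lemma mm_pos : 0 < mm := by unfold mm; nlinarith [sq2_lb]
lemma MM_lt_one : MM < 1 := by unfold MM; nlinarith [sq2_ub]
lemma mm_lt_MM : mm < MM := by unfold mm MM; nlinarith [sq2_lb]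
lemma MM_pos : 0 < MM := lt_trans mm_pos mm_lt_MM
lemma mm_lt_one : mm < 1 := lt_trans mm_lt_MM MM_lt_one

/-- the digit map -/
noncomputable def gg (a : ℕ) (x : ℝ) : ℝ := 1 / ((a : ℝ) + x)

def Icm : Set ℝ := Set.Icc mm MM

lemma mem_Icm {x : ℝ} : x ∈ Icm ↔ mm ≤ x ∧ x ≤ MM := Set.mem_Icc

lemma Icm_pos {x : ℝ} (hx : x ∈ Icm) : 0 < x := lt_of_lt_of_le mm_pos (mem_Icm.1 hx).1
lemma Icm_lt_one {x : ℝ} (hx : x ∈ Icm) : x < 1 := lt_of_le_of_lt (mem_Icm.1 hx).2 MM_lt_one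

lemma den_pos {a : ℕ} (ha : 1 ≤ a) {x : ℝ} (hx : 0 < x) : 0 < (a : ℝ) + x := by
  have : (1:ℝ) ≤ (a:ℝ) := by exact_mod_cast ha
  linarith

/-- exact identity : MM * (1+mm) = 1 -/
lemma MM_mm_id1 : MM * (1 + mm) = 1 := by
  unfold mm MM; nlinarith [sq2_sq]
/-- exact identity : mm * (4+MM) = 1 -/
lemma MM_mm_id2 : mm * (4 + MM) = 1 := by
  unfold mm MM; nlinarith [sq2_sq]

lemma gg_mem {a : ℕ} (ha : 1 ≤ a ∧ a ≤ 4) {x : ℝ} (hx : x ∈ Icm) : gg a x ∈ Icm := by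
  obtain ⟨hx1, hx2⟩ := mem_Icm.1 hx
  have hxpos : 0 < x := Icm_pos hx
  have hd : 0 < (a:ℝ) + x := den_pos ha.1 hxpos
  have ha1 : (1:ℝ) ≤ (a:ℝ) := by exact_mod_cast ha.1
  have ha4 : (a:ℝ) ≤ 4 := by exact_mod_cast ha.2
  rw [mem_Icm]
  constructor
  · rw [gg, le_div_iff₀ hd]
    nlinarith [MM_mm_id2, mm_pos]
  · rw [gg, div_le_iff₀ hd]
    nlinarith [MM_mm_id1, mm_pos]

lemma gg_diff {a : ℕ} (ha : 1 ≤ a) {x y : ℝ} (hx : 0 < x) (hy : 0 < y) :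
    gg a y - gg a x = (x - y) / (((a:ℝ) + x) * ((a:ℝ) + y)) := by
  have h1 : 0 < (a:ℝ) + x := den_pos ha hx
  have h2 : 0 < (a:ℝ) + y := den_pos ha hy
  field_simp [gg]
  rw [gg, gg]; field_simp
  ring

lemma gg_anti {a : ℕ} (ha : 1 ≤ a) {x y : ℝ} (hx : 0 < x) (hy : 0 < y) (hxy : x < y) :
    gg a y < gg a x := by
  have h1 : 0 < (a:ℝ) + x := den_pos ha hx
  have h2 : 0 < (a:ℝ) + y := den_pos ha hy
  have := gg_diff ha hx hy
  have hp : (x - y) / (((a:ℝ) + x) * ((a:ℝ) + y)) < 0 := by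
    apply div_neg_of_neg_of_pos <;> nlinarith
  linarith

lemma gg_anti_le {a : ℕ} (ha : 1 ≤ a) {x y : ℝ} (hx : 0 < x) (hy : 0 < y) (hxy : x ≤ y) :
    gg a y ≤ gg a x := by
  rcases eq_or_lt_of_le hxy with h | h
  · subst h; rfl
  · exact le_of_lt (gg_anti ha hx hy h)

/-- gg decreasing in the digit -/
lemma gg_digit_anti {a b : ℕ} (hb : 1 ≤ b) (hba : b ≤ a) {x : ℝ} (hx : 0 < x) :
    gg a x ≤ gg b x := by
  have h1 : 0 < (b:ℝ) + x := den_pos hb hx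
  have h2 : 0 < (a:ℝ) + x := den_pos (le_trans hb hba) hx
  have : (b:ℝ) ≤ (a:ℝ) := by exact_mod_cast hba
  rw [gg, gg, div_le_div_iff₀ h2 h1]
  linarith


-- closed forms of the eight parameter points
lemma p1_eq : gg 4 mm = (14 - 2*sq2)/47 := by
  unfold gg mm
  rw [div_eq_div_iff (by nlinarith [sq2_lb]) (by norm_num)]
  push_cast
  nlinarith [sq2_sq]
lemma p2_eq : gg 3 MM = (2*sq2 - 1)/7 := by
  unfold gg MM
  rw [div_eq_div_iff (by nlinarith [sq2_lb]) (by norm_num)]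
  push_cast
  nlinarith [sq2_sq]
lemma p3_eq : gg 3 mm = (10 - 2*sq2)/23 := by
  unfold gg mm
  rw [div_eq_div_iff (by nlinarith [sq2_lb]) (by norm_num)]
  push_cast
  nlinarith [sq2_sq]
lemma p4_eq : gg 2 MM = sq2/4 := by
  unfold gg MM
  rw [div_eq_div_iff (by nlinarith [sq2_lb]) (by norm_num)]
  push_cast
  nlinarith [sq2_sq]
lemma p5_eq : gg 2 mm = (6 - 2*sq2)/7 := by
  unfold gg mm
  rw [div_eq_div_iff (by nlinarith [sq2_lb]) (by norm_num)]
  push_cast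
  nlinarith [sq2_sq]
lemma p6_eq : gg 1 MM = (2*sq2 + 1)/7 := by
  unfold gg MM
  rw [div_eq_div_iff (by nlinarith [sq2_lb]) (by norm_num)]
  push_cast
  nlinarith [sq2_sq]
lemma p0_eq : gg 4 MM = mm := by
  unfold gg MM mm
  rw [div_eq_div_iff (by nlinarith [sq2_lb]) (by norm_num)]
  push_cast
  nlinarith [sq2_sq]
lemma p7_eq : gg 1 mm = MM := by
  unfold gg mm MM
  rw [eq_comm, eq_div_iff (by nlinarith [sq2_lb])]
  push_cast
  nlinarith [sq2_sq]

-- strict ordering of the eight points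
lemma ord01 : mm < gg 4 mm := by rw [p1_eq]; unfold mm; nlinarith [sq2_ub]
lemma ord12 : gg 4 mm < gg 3 MM := by rw [p1_eq, p2_eq]; nlinarith [sq2_lb]
lemma ord23 : gg 3 MM < gg 3 mm := by rw [p2_eq, p3_eq]; nlinarith [sq2_ub]
lemma ord34 : gg 3 mm < gg 2 MM := by rw [p3_eq, p4_eq]; nlinarith [sq2_lb]
lemma ord45 : gg 2 MM < gg 2 mm := by rw [p4_eq, p5_eq]; nlinarith [sq2_ub]
lemma ord56 : gg 2 mm < gg 1 MM := by rw [p5_eq, p6_eq]; nlinarith [sq2_lb]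
lemma ord67 : gg 1 MM < MM := by rw [p6_eq]; unfold MM; nlinarith [sq2_lb]

/-- the thickness constant -/
noncomputable def γ : ℝ := 19/20

-- the 12 scalar inequalities.  L-type for gap [b,z] with bridge [a,b]:
--   (z-b) ≤ γ(b-a)  and  (z-b)*a ≤ γ(b-a)*z.
-- R-type for gap [a,b] with bridge [b,z]:
--   (b-a) ≤ γ(z-b)  and  (b-a)*z ≤ γ(z-b)*a.
lemma S34L1 : gg 3 MM - gg 4 mm ≤ γ * (gg 4 mm - mm) := by
  rw [p1_eq, p2_eq]; unfold mm γ; nlinarith [sq2_ub, sq2_lb]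
lemma S34L2 : (gg 3 MM - gg 4 mm) * mm ≤ γ * ((gg 4 mm - mm) * gg 3 MM) := by
  rw [p1_eq, p2_eq]; unfold mm γ; nlinarith [sq2_ub, sq2_lb, sq2_sq]
lemma S34R1 : gg 3 MM - gg 4 mm ≤ γ * (gg 3 mm - gg 3 MM) := by
  rw [p1_eq, p2_eq, p3_eq]; unfold γ; nlinarith [sq2_ub, sq2_lb]
lemma S34R2 : (gg 3 MM - gg 4 mm) * gg 3 mm ≤ γ * ((gg 3 mm - gg 3 MM) * gg 4 mm) := by
  rw [p1_eq, p2_eq, p3_eq]; unfold γ; nlinarith [sq2_ub, sq2_lb, sq2_sq]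
lemma S23L1 : gg 2 MM - gg 3 mm ≤ γ * (gg 3 mm - gg 3 MM) := by
  rw [p2_eq, p3_eq, p4_eq]; unfold γ; nlinarith [sq2_ub, sq2_lb]
lemma S23L2 : (gg 2 MM - gg 3 mm) * gg 3 MM ≤ γ * ((gg 3 mm - gg 3 MM) * gg 2 MM) := by
  rw [p2_eq, p3_eq, p4_eq]; unfold γ; nlinarith [sq2_ub, sq2_lb, sq2_sq]
lemma S23R1 : gg 2 MM - gg 3 mm ≤ γ * (gg 2 mm - gg 2 MM) := by
  rw [p3_eq, p4_eq, p5_eq]; unfold γ; nlinarith [sq2_ub, sq2_lb]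
lemma S23R2 : (gg 2 MM - gg 3 mm) * gg 2 mm ≤ γ * ((gg 2 mm - gg 2 MM) * gg 3 mm) := by
  rw [p3_eq, p4_eq, p5_eq]; unfold γ; nlinarith [sq2_ub, sq2_lb, sq2_sq]
lemma S12L1 : gg 1 MM - gg 2 mm ≤ γ * (gg 2 mm - gg 2 MM) := by
  rw [p4_eq, p5_eq, p6_eq]; unfold γ; nlinarith [sq2_ub, sq2_lb]
lemma S12L2 : (gg 1 MM - gg 2 mm) * gg 2 MM ≤ γ * ((gg 2 mm - gg 2 MM) * gg 1 MM) := by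
  rw [p4_eq, p5_eq, p6_eq]; unfold γ; nlinarith [sq2_ub, sq2_lb, sq2_sq]
lemma S12R1 : gg 1 MM - gg 2 mm ≤ γ * (MM - gg 1 MM) := by
  rw [p5_eq, p6_eq]; unfold MM γ; nlinarith [sq2_ub, sq2_lb]
lemma S12R2 : (gg 1 MM - gg 2 mm) * MM ≤ γ * ((MM - gg 1 MM) * gg 2 mm) := by
  rw [p5_eq, p6_eq]; unfold MM γ; nlinarith [sq2_ub, sq2_lb, sq2_sq]

lemma gamma_pos : 0 < γ := by norm_num [γ]
lemma gamma_lt_one : γ < 1 := by norm_num [γ]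


-- ==== new content ====

def Good (w : List ℕ) : Prop := ∀ a ∈ w, 1 ≤ a ∧ a ≤ 4

lemma Good_nil : Good [] := by intro a h; simp at h
lemma Good_cons {a : ℕ} {w : List ℕ} : Good (a :: w) ↔ (1 ≤ a ∧ a ≤ 4) ∧ Good w := by
  constructor
  · intro h; exact ⟨h a (by simp), fun b hb => h b (by simp [hb])⟩
  · rintro ⟨h1, h2⟩ b hb
    rcases List.mem_cons.1 hb with h | h
    · subst h; exact h1
    · exact h2 b h
lemma Good_append {w v : List ℕ} : Good (w ++ v) ↔ Good w ∧ Good v := by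
  constructor
  · intro h; exact ⟨fun a ha => h a (by simp [ha]), fun a ha => h a (by simp [ha])⟩
  · rintro ⟨h1, h2⟩ a ha
    rcases List.mem_append.1 ha with h | h
    · exact h1 a h
    · exact h2 a h

noncomputable def hh : List ℕ → ℝ → ℝ
  | [], x => x
  | a :: w, x => gg a (hh w x)

@[simp] lemma hh_nil (x : ℝ) : hh [] x = x := rfl
@[simp] lemma hh_cons (a : ℕ) (w : List ℕ) (x : ℝ) : hh (a :: w) x = gg a (hh w x) := rfl

lemma hh_mem {w : List ℕ} (hw : Good w) {x : ℝ} (hx : x ∈ Icm) : hh w x ∈ Icm := by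
  induction w with
  | nil => simpa using hx
  | cons a w ih =>
      rw [Good_cons] at hw
      exact gg_mem hw.1 (ih hw.2)

lemma hh_append (w : List ℕ) (a : ℕ) (x : ℝ) : hh (w ++ [a]) x = hh w (gg a x) := by
  induction w with
  | nil => rfl
  | cons b w ih => simp [hh, ih]

noncomputable def dd : List ℕ → ℝ → ℝ
  | [], _ => 1
  | a :: w, x => ((a : ℝ) + hh w x) * dd w x

@[simp] lemma dd_nil (x : ℝ) : dd [] x = 1 := rfl
@[simp] lemma dd_cons (a : ℕ) (w : List ℕ) (x : ℝ) :
    dd (a :: w) x = ((a : ℝ) + hh w x) * dd w x := rfl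

lemma one_add_mm_le_den {a : ℕ} (ha : 1 ≤ a) {y : ℝ} (hy : y ∈ Icm) :
    1 + mm ≤ (a : ℝ) + y := by
  have h1 : (1:ℝ) ≤ (a:ℝ) := by exact_mod_cast ha
  have := (mem_Icm.1 hy).1
  linarith

lemma dd_ge_one {w : List ℕ} (hw : Good w) {x : ℝ} (hx : x ∈ Icm) : 1 ≤ dd w x := by
  induction w with
  | nil => simp
  | cons a w ih =>
      rw [Good_cons] at hw
      have h1 := one_add_mm_le_den hw.1.1 (hh_mem hw.2 hx)
      have h2 := ih hw.2
      have := mm_pos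
      simp only [dd_cons]
      nlinarith

lemma dd_pos {w : List ℕ} (hw : Good w) {x : ℝ} (hx : x ∈ Icm) : 0 < dd w x :=
  lt_of_lt_of_le one_pos (dd_ge_one hw hx)

lemma dd_ge_geom {w : List ℕ} (hw : Good w) {x : ℝ} (hx : x ∈ Icm) :
    (1 + mm) ^ w.length ≤ dd w x := by
  induction w with
  | nil => simp
  | cons a w ih =>
      rw [Good_cons] at hw
      have h1 := one_add_mm_le_den hw.1.1 (hh_mem hw.2 hx)
      have h2 := ih hw.2
      have h3 : (0:ℝ) < (1+mm)^w.length := pow_pos (by nlinarith [mm_pos]) _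
      simp only [dd_cons, List.length_cons, pow_succ]
      nlinarith [mm_pos]

/-- fundamental difference identity -/
lemma hh_diff {w : List ℕ} (hw : Good w) {x y : ℝ} (hx : x ∈ Icm) (hy : y ∈ Icm) :
    hh w y - hh w x =
      (if Even w.length then y - x else x - y) / (dd w x * dd w y) := by
  induction w with
  | nil => simp
  | cons a w ih =>
      rw [Good_cons] at hw
      have hhx := hh_mem hw.2 hx
      have hhy := hh_mem hw.2 hy
      have hdx := dd_pos hw.2 hx
      have hdy := dd_pos hw.2 hy
      have h1 : 0 < (a:ℝ) + hh w x := den_pos hw.1.1 (Icm_pos hhx)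
      have h2 : 0 < (a:ℝ) + hh w y := den_pos hw.1.1 (Icm_pos hhy)
      have key := gg_diff hw.1.1 (Icm_pos hhx) (Icm_pos hhy)
      simp only [hh_cons, dd_cons, List.length_cons]
      rw [key, show hh w x - hh w y = -(hh w y - hh w x) by ring, ih hw.2]
      rcases Nat.even_or_odd w.length with he | ho
      · rw [if_pos he, if_neg (by simp [Nat.even_add_one, he])]
        field_simp
        ring
      · have hne : ¬ Even w.length := Nat.not_even_iff_odd.2 ho
        rw [if_neg hne, if_pos (by simp [Nat.even_add_one, hne])]
        field_simp
        ring

-- monotonicity of hh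
lemma hh_mono_even {w : List ℕ} (hw : Good w) (he : Even w.length)
    {x y : ℝ} (hx : x ∈ Icm) (hy : y ∈ Icm) (hxy : x ≤ y) : hh w x ≤ hh w y := by
  have h := hh_diff hw hx hy
  rw [if_pos he] at h
  have h1 := dd_pos hw hx
  have h2 := dd_pos hw hy
  have : 0 ≤ (y - x) / (dd w x * dd w y) :=
    div_nonneg (by linarith) (by positivity)
  linarith

lemma hh_anti_odd {w : List ℕ} (hw : Good w) (he : ¬ Even w.length)
    {x y : ℝ} (hx : x ∈ Icm) (hy : y ∈ Icm) (hxy : x ≤ y) : hh w y ≤ hh w x := by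
  have h := hh_diff hw hx hy
  rw [if_neg he] at h
  have h1 := dd_pos hw hx
  have h2 := dd_pos hw hy
  have : (x - y) / (dd w x * dd w y) ≤ 0 := by
    apply div_nonpos_of_nonpos_of_nonneg <;> nlinarith
  linarith

lemma hh_strict_mono_even {w : List ℕ} (hw : Good w) (he : Even w.length)
    {x y : ℝ} (hx : x ∈ Icm) (hy : y ∈ Icm) (hxy : x < y) : hh w x < hh w y := by
  have h := hh_diff hw hx hy
  rw [if_pos he] at h
  have h1 := dd_pos hw hx
  have h2 := dd_pos hw hy
  have : 0 < (y - x) / (dd w x * dd w y) :=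
    div_pos (by linarith) (by positivity)
  linarith

lemma hh_strict_anti_odd {w : List ℕ} (hw : Good w) (he : ¬ Even w.length)
    {x y : ℝ} (hx : x ∈ Icm) (hy : y ∈ Icm) (hxy : x < y) : hh w y < hh w x := by
  have h := hh_diff hw hx hy
  rw [if_neg he] at h
  have h1 := dd_pos hw hx
  have h2 := dd_pos hw hy
  have : (x - y) / (dd w x * dd w y) < 0 := by
    apply div_neg_of_neg_of_pos
    · linarith
    · positivity
  linarith

noncomputable def xlo (w : List ℕ) : ℝ := min (hh w mm) (hh w MM)
noncomputable def xhi (w : List ℕ) : ℝ := max (hh w mm) (hh w MM)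

lemma mm_mem_Icm : mm ∈ Icm := mem_Icm.2 ⟨le_refl _, le_of_lt mm_lt_MM⟩
lemma MM_mem_Icm : MM ∈ Icm := mem_Icm.2 ⟨le_of_lt mm_lt_MM, le_refl _⟩

lemma xlo_even {w : List ℕ} (hw : Good w) (he : Even w.length) :
    xlo w = hh w mm ∧ xhi w = hh w MM := by
  have := hh_mono_even hw he mm_mem_Icm MM_mem_Icm (le_of_lt mm_lt_MM)
  constructor
  · exact min_eq_left this
  · exact max_eq_right this

lemma xlo_odd {w : List ℕ} (hw : Good w) (he : ¬ Even w.length) :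
    xlo w = hh w MM ∧ xhi w = hh w mm := by
  have := hh_anti_odd hw he mm_mem_Icm MM_mem_Icm (le_of_lt mm_lt_MM)
  constructor
  · exact min_eq_right this
  · exact max_eq_left this

lemma xlo_le_xhi (w : List ℕ) : xlo w ≤ xhi w := min_le_max

lemma hh_between {w : List ℕ} (hw : Good w) {y : ℝ} (hy : y ∈ Icm) :
    xlo w ≤ hh w y ∧ hh w y ≤ xhi w := by
  rcases Nat.even_or_odd w.length with he | ho
  · obtain ⟨h1, h2⟩ := xlo_even hw he
    rw [h1, h2]
    exact ⟨hh_mono_even hw he mm_mem_Icm hy (mem_Icm.1 hy).1,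
           hh_mono_even hw he hy MM_mem_Icm (mem_Icm.1 hy).2⟩
  · have he := Nat.not_even_iff_odd.2 ho
    obtain ⟨h1, h2⟩ := xlo_odd hw he
    rw [h1, h2]
    exact ⟨hh_anti_odd hw he hy MM_mem_Icm (mem_Icm.1 hy).2,
           hh_anti_odd hw he mm_mem_Icm hy (mem_Icm.1 hy).1⟩

lemma xlo_mem_Icm {w : List ℕ} (hw : Good w) : xlo w ∈ Icm := by
  rcases Nat.even_or_odd w.length with he | ho
  · rw [(xlo_even hw he).1]; exact hh_mem hw mm_mem_Icm
  · rw [(xlo_odd hw (Nat.not_even_iff_odd.2 ho)).1]; exact hh_mem hw MM_mem_Icm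

lemma xhi_mem_Icm {w : List ℕ} (hw : Good w) : xhi w ∈ Icm := by
  rcases Nat.even_or_odd w.length with he | ho
  · rw [(xlo_even hw he).2]; exact hh_mem hw MM_mem_Icm
  · rw [(xlo_odd hw (Nat.not_even_iff_odd.2 ho)).2]; exact hh_mem hw mm_mem_Icm

/-- nesting of cylinders under append -/
lemma hull_mono {w : List ℕ} (hw : Good w) {a : ℕ} (ha : 1 ≤ a ∧ a ≤ 4) :
    xlo w ≤ xlo (w ++ [a]) ∧ xhi (w ++ [a]) ≤ xhi w := by
  have h1 : hh (w ++ [a]) mm = hh w (gg a mm) := hh_append w a mm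
  have h2 : hh (w ++ [a]) MM = hh w (gg a MM) := hh_append w a MM
  have g1 := gg_mem ha mm_mem_Icm
  have g2 := gg_mem ha MM_mem_Icm
  have b1 := hh_between hw g1
  have b2 := hh_between hw g2
  constructor
  · apply le_min
    · rw [h1]; exact b1.1
    · rw [h2]; exact b2.1
  · apply max_le
    · rw [h1]; exact b1.2
    · rw [h2]; exact b2.2

/-- `dd w` is affine with controlled coefficients. -/
lemma dd_affine {w : List ℕ} (hw : Good w) :
    ∃ c d : ℝ, 0 ≤ c ∧ c ≤ d ∧ ∀ x ∈ Icm, dd w x = c * x + d := by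
  suffices h : ∃ c d cn dn : ℝ, 0 ≤ c ∧ c ≤ d ∧ 0 ≤ cn ∧ 0 ≤ dn ∧ c + cn ≤ d + dn ∧
      ∀ x ∈ Icm, dd w x = c * x + d ∧ hh w x * dd w x = cn * x + dn by
    obtain ⟨c, d, cn, dn, h1, h2, _, _, _, h6⟩ := h
    exact ⟨c, d, h1, h2, fun x hx => (h6 x hx).1⟩
  induction w with
  | nil =>
      refine ⟨0, 1, 1, 0, by norm_num, by norm_num, by norm_num, by norm_num, by norm_num, ?_⟩
      intro x hx
      simp
  | cons a w ih =>
      rw [Good_cons] at hw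
      obtain ⟨c, d, cn, dn, h1, h2, h3, h4, h5, h6⟩ := ih hw.2
      have ha1 : (1:ℝ) ≤ (a:ℝ) := by exact_mod_cast hw.1.1
      refine ⟨(a:ℝ) * c + cn, (a:ℝ) * d + dn, c, d, by nlinarith, by nlinarith,
        h1, le_trans h1 h2, by nlinarith, ?_⟩
      intro x hx
      obtain ⟨e1, e2⟩ := h6 x hx
      have hhx := hh_mem hw.2 hx
      have hpos : 0 < (a:ℝ) + hh w x := den_pos hw.1.1 (Icm_pos hhx)
      constructor
      · simp only [dd_cons]
        nlinarith [e1, e2]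
      · simp only [hh_cons, dd_cons, gg]
        rw [div_mul_eq_mul_div, mul_comm ((a:ℝ) + hh w x) (dd w x),
          ← mul_assoc, mul_div_assoc, div_self (ne_of_gt hpos)]
        rw [mul_one, one_mul, e1]

/-- key inequality, L type: gap [β,ζ] with left bridge [α,β] in parameter space. -/
lemma key_len_L {w : List ℕ} (hw : Good w) {α β ζ : ℝ}
    (hα : α ∈ Icm) (hζ : ζ ∈ Icm)
    (hs1 : ζ - β ≤ γ * (β - α)) (hs2 : (ζ - β) * α ≤ γ * ((β - α) * ζ)) :
    (ζ - β) * dd w α ≤ γ * ((β - α) * dd w ζ) := by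
  obtain ⟨c, d, hc, hcd, he⟩ := dd_affine hw
  rw [he α hα, he ζ hζ]
  have hd : 0 ≤ d := le_trans hc hcd
  nlinarith [mul_le_mul_of_nonneg_left hs2 hc, mul_le_mul_of_nonneg_left hs1 hd]

/-- key inequality, R type: gap [α,β] with right bridge [β,ζ]. -/
lemma key_len_R {w : List ℕ} (hw : Good w) {α β ζ : ℝ}
    (hα : α ∈ Icm) (hζ : ζ ∈ Icm)
    (hs1 : β - α ≤ γ * (ζ - β)) (hs2 : (β - α) * ζ ≤ γ * ((ζ - β) * α)) :
    (β - α) * dd w ζ ≤ γ * ((ζ - β) * dd w α) := by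
  obtain ⟨c, d, hc, hcd, he⟩ := dd_affine hw
  rw [he α hα, he ζ hζ]
  have hd : 0 ≤ d := le_trans hc hcd
  nlinarith [mul_le_mul_of_nonneg_left hs2 hc, mul_le_mul_of_nonneg_left hs1 hd]

/-- absolute-value form, L type -/
lemma key_abs_L {w : List ℕ} (hw : Good w) {α β ζ : ℝ}
    (hα : α ∈ Icm) (hβ : β ∈ Icm) (hζ : ζ ∈ Icm)
    (hs1 : ζ - β ≤ γ * (β - α)) (hs2 : (ζ - β) * α ≤ γ * ((β - α) * ζ))
    (hab : α ≤ β) (hbz : β ≤ ζ) :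
    |hh w ζ - hh w β| ≤ γ * |hh w β - hh w α| := by
  have d1 := hh_diff hw hβ hζ
  have d2 := hh_diff hw hα hβ
  have pα := dd_pos hw hα
  have pβ := dd_pos hw hβ
  have pζ := dd_pos hw hζ
  have key := key_len_L hw hα hζ hs1 hs2
  have main : (ζ - β) / (dd w β * dd w ζ) ≤ γ * ((β - α) / (dd w α * dd w β)) := by
    rw [mul_div_assoc' γ, div_le_div_iff₀ (by positivity) (by positivity)]
    calc (ζ - β) * (dd w α * dd w β) = ((ζ - β) * dd w α) * dd w β := by ring
      _ ≤ (γ * ((β - α) * dd w ζ)) * dd w β := mul_le_mul_of_nonneg_right key pβ.le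
      _ = γ * (β - α) * (dd w β * dd w ζ) := by ring
  rcases Nat.even_or_odd w.length with he | ho
  · rw [if_pos he] at d1 d2
    rw [abs_of_nonneg (by rw [d1]; exact div_nonneg (by linarith) (by positivity)),
        abs_of_nonneg (by rw [d2]; exact div_nonneg (by linarith) (by positivity)), d1, d2]
    exact main
  · have he := Nat.not_even_iff_odd.2 ho
    rw [if_neg he] at d1 d2
    rw [abs_of_nonpos (by rw [d1]; exact div_nonpos_of_nonpos_of_nonneg (by linarith) (by positivity)),
        abs_of_nonpos (by rw [d2]; exact div_nonpos_of_nonpos_of_nonneg (by linarith) (by positivity)),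
        d1, d2]
    have e1 : -((β - ζ) / (dd w β * dd w ζ)) = (ζ - β) / (dd w β * dd w ζ) := by ring
    have e2 : -((α - β) / (dd w α * dd w β)) = (β - α) / (dd w α * dd w β) := by ring
    rw [e1, e2]
    exact main

/-- absolute-value form, R type -/
lemma key_abs_R {w : List ℕ} (hw : Good w) {α β ζ : ℝ}
    (hα : α ∈ Icm) (hβ : β ∈ Icm) (hζ : ζ ∈ Icm)
    (hs1 : β - α ≤ γ * (ζ - β)) (hs2 : (β - α) * ζ ≤ γ * ((ζ - β) * α))
    (hab : α ≤ β) (hbz : β ≤ ζ) :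
    |hh w β - hh w α| ≤ γ * |hh w ζ - hh w β| := by
  have d1 := hh_diff hw hα hβ
  have d2 := hh_diff hw hβ hζ
  have pα := dd_pos hw hα
  have pβ := dd_pos hw hβ
  have pζ := dd_pos hw hζ
  have key := key_len_R hw hα hζ hs1 hs2
  have main : (β - α) / (dd w α * dd w β) ≤ γ * ((ζ - β) / (dd w β * dd w ζ)) := by
    rw [mul_div_assoc' γ, div_le_div_iff₀ (by positivity) (by positivity)]
    calc (β - α) * (dd w β * dd w ζ) = ((β - α) * dd w ζ) * dd w β := by ring
      _ ≤ (γ * ((ζ - β) * dd w α)) * dd w β := mul_le_mul_of_nonneg_right key pβ.le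
      _ = γ * (ζ - β) * (dd w α * dd w β) := by ring
  rcases Nat.even_or_odd w.length with he | ho
  · rw [if_pos he] at d1 d2
    rw [abs_of_nonneg (by rw [d1]; exact div_nonneg (by linarith) (by positivity)),
        abs_of_nonneg (by rw [d2]; exact div_nonneg (by linarith) (by positivity)), d1, d2]
    exact main
  · have he := Nat.not_even_iff_odd.2 ho
    rw [if_neg he] at d1 d2
    rw [abs_of_nonpos (by rw [d1]; exact div_nonpos_of_nonpos_of_nonneg (by linarith) (by positivity)),
        abs_of_nonpos (by rw [d2]; exact div_nonpos_of_nonpos_of_nonneg (by linarith) (by positivity)),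
        d1, d2]
    have e1 : -((β - ζ) / (dd w β * dd w ζ)) = (ζ - β) / (dd w β * dd w ζ) := by ring
    have e2 : -((α - β) / (dd w α * dd w β)) = (β - α) / (dd w α * dd w β) := by ring
    rw [e1, e2]
    exact main


-- ===== Section 4 : values of infinite digit sequences =====

def pre (σ : ℕ → ℕ) (k : ℕ) : List ℕ := (List.range k).map σ

@[simp] lemma pre_zero (σ : ℕ → ℕ) : pre σ 0 = [] := rfl
lemma pre_succ_append (σ : ℕ → ℕ) (k : ℕ) : pre σ (k+1) = pre σ k ++ [σ k] := by
  simp [pre, List.range_succ]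
lemma pre_succ_cons (σ : ℕ → ℕ) (k : ℕ) :
    pre σ (k+1) = σ 0 :: pre (fun i => σ (i+1)) k := by
  simp [pre, List.range_succ_eq_map, List.map_map]
lemma pre_length (σ : ℕ → ℕ) (k : ℕ) : (pre σ k).length = k := by simp [pre]

def Gs (σ : ℕ → ℕ) : Prop := ∀ i, 1 ≤ σ i ∧ σ i ≤ 4

lemma Gs_pre {σ : ℕ → ℕ} (hσ : Gs σ) (k : ℕ) : Good (pre σ k) := by
  intro a ha
  simp only [pre, List.mem_map] at ha
  obtain ⟨i, _, rfl⟩ := ha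
  exact hσ i

lemma Gs_tail {σ : ℕ → ℕ} (hσ : Gs σ) : Gs (fun i => σ (i+1)) := fun i => hσ (i+1)

lemma xlo_pre_mono {σ : ℕ → ℕ} (hσ : Gs σ) : Monotone (fun k => xlo (pre σ k)) := by
  apply monotone_nat_of_le_succ
  intro k
  rw [pre_succ_append]
  exact (hull_mono (Gs_pre hσ k) (hσ k)).1

lemma xhi_pre_anti {σ : ℕ → ℕ} (hσ : Gs σ) : Antitone (fun k => xhi (pre σ k)) := by
  apply antitone_nat_of_succ_le
  intro k
  rw [pre_succ_append]
  exact (hull_mono (Gs_pre hσ k) (hσ k)).2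

lemma xlo_le_xhi_pre {σ : ℕ → ℕ} (hσ : Gs σ) (k l : ℕ) :
    xlo (pre σ k) ≤ xhi (pre σ l) := by
  rcases le_total k l with h | h
  · exact le_trans (xlo_pre_mono hσ h) (xlo_le_xhi _)
  · exact le_trans (xlo_le_xhi _) (xhi_pre_anti hσ h)

noncomputable def xval (σ : ℕ → ℕ) : ℝ := ⨆ k, xlo (pre σ k)

lemma xval_bddAbove {σ : ℕ → ℕ} (hσ : Gs σ) :
    BddAbove (Set.range (fun k => xlo (pre σ k))) := by
  refine ⟨MM, ?_⟩
  rintro y ⟨k, rfl⟩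
  exact (mem_Icm.1 (xlo_mem_Icm (Gs_pre hσ k))).2

lemma xval_ge {σ : ℕ → ℕ} (hσ : Gs σ) (k : ℕ) : xlo (pre σ k) ≤ xval σ :=
  le_ciSup (xval_bddAbove hσ) k

lemma xval_le {σ : ℕ → ℕ} (hσ : Gs σ) (k : ℕ) : xval σ ≤ xhi (pre σ k) :=
  ciSup_le (fun l => xlo_le_xhi_pre hσ l k)

lemma xval_mem_Icm {σ : ℕ → ℕ} (hσ : Gs σ) : xval σ ∈ Icm := by
  rw [mem_Icm]
  constructor
  · have := xval_ge hσ 0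
    have e : xlo (pre σ 0) = mm := by
      simp [xlo, min_eq_left mm_lt_MM.le]
    linarith [e ▸ this]
  · have := xval_le hσ 0
    have e : xhi (pre σ 0) = MM := by
      simp [xhi, max_eq_right mm_lt_MM.le]
    linarith [e ▸ this]

/-- width of a cylinder -/
lemma hull_width {w : List ℕ} (hw : Good w) :
    xhi w - xlo w ≤ (MM - mm) * (((1+mm)^2)⁻¹) ^ w.length := by
  have h := hh_diff hw mm_mem_Icm MM_mem_Icm
  have p1 := dd_pos hw mm_mem_Icm
  have p2 := dd_pos hw MM_mem_Icm
  have g1 := dd_ge_geom hw mm_mem_Icm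
  have g2 := dd_ge_geom hw MM_mem_Icm
  have hgp : (0:ℝ) < (1+mm) ^ w.length := pow_pos (by nlinarith [mm_pos]) _
  have hwidth : xhi w - xlo w = |hh w MM - hh w mm| := by
    rcases le_total (hh w mm) (hh w MM) with hc | hc
    · rw [abs_of_nonneg (by linarith)]
      simp [xlo, xhi, min_eq_left hc, max_eq_right hc]
    · rw [abs_of_nonpos (by linarith)]
      simp [xlo, xhi, min_eq_right hc, max_eq_left hc]
  rw [hwidth, h]
  have hMm : (0:ℝ) < MM - mm := by linarith [mm_lt_MM]
  rcases Nat.even_or_odd w.length with he | ho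
  · rw [if_pos he, abs_of_nonneg (div_nonneg (by linarith) (by positivity))]
    rw [div_le_iff₀ (by positivity)]
    calc MM - mm = (MM - mm) * 1 := by ring
      _ ≤ (MM-mm) * ((((1+mm)^2)⁻¹) ^ w.length * (dd w mm * dd w MM)) := by
          apply mul_le_mul_of_nonneg_left _ hMm.le
          have hb : (0:ℝ) < 1 + mm := by nlinarith [mm_pos]
          have hq : (0:ℝ) < (((1+mm)^2)⁻¹ : ℝ) ^ w.length :=
            pow_pos (inv_pos.2 (by nlinarith)) _
          have key : ((1+mm):ℝ)^w.length * (1+mm)^w.length ≤ dd w mm * dd w MM := by nlinarith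
          have e : ((((1+mm)^2)⁻¹ : ℝ)) ^ w.length * (((1+mm):ℝ)^w.length * (1+mm)^w.length) = 1 := by
            rw [inv_pow, ← pow_mul, ← pow_add, two_mul]
            exact inv_mul_cancel₀ (ne_of_gt (pow_pos hb _))
          calc (1:ℝ) = (((1+mm)^2)⁻¹:ℝ) ^ w.length * (((1+mm):ℝ)^w.length * (1+mm)^w.length) := e.symm
            _ ≤ (((1+mm)^2)⁻¹:ℝ) ^ w.length * (dd w mm * dd w MM) :=
                mul_le_mul_of_nonneg_left key hq.le
      _ = (MM - mm) * (((1+mm)^2)⁻¹) ^ w.length * (dd w mm * dd w MM) := by ring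
  · rw [if_neg (Nat.not_even_iff_odd.2 ho), abs_of_nonpos
      (div_nonpos_of_nonpos_of_nonneg (by linarith) (by positivity))]
    have : -((mm - MM) / (dd w mm * dd w MM)) = (MM - mm)/(dd w mm * dd w MM) := by ring
    rw [this, div_le_iff₀ (by positivity)]
    calc MM - mm = (MM - mm) * 1 := by ring
      _ ≤ (MM-mm) * ((((1+mm)^2)⁻¹) ^ w.length * (dd w mm * dd w MM)) := by
          apply mul_le_mul_of_nonneg_left _ hMm.le
          have hb : (0:ℝ) < 1 + mm := by nlinarith [mm_pos]
          have hq : (0:ℝ) < (((1+mm)^2)⁻¹ : ℝ) ^ w.length :=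
            pow_pos (inv_pos.2 (by nlinarith)) _
          have key : ((1+mm):ℝ)^w.length * (1+mm)^w.length ≤ dd w mm * dd w MM := by nlinarith
          have e : ((((1+mm)^2)⁻¹ : ℝ)) ^ w.length * (((1+mm):ℝ)^w.length * (1+mm)^w.length) = 1 := by
            rw [inv_pow, ← pow_mul, ← pow_add, two_mul]
            exact inv_mul_cancel₀ (ne_of_gt (pow_pos hb _))
          calc (1:ℝ) = (((1+mm)^2)⁻¹:ℝ) ^ w.length * (((1+mm):ℝ)^w.length * (1+mm)^w.length) := e.symm
            _ ≤ (((1+mm)^2)⁻¹:ℝ) ^ w.length * (dd w mm * dd w MM) :=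
                mul_le_mul_of_nonneg_left key hq.le
      _ = (MM - mm) * (((1+mm)^2)⁻¹) ^ w.length * (dd w mm * dd w MM) := by ring

lemma ratio_lt_one : (((1+mm)^2)⁻¹ : ℝ) < 1 := by
  rw [inv_lt_one_iff₀]
  right
  nlinarith [mm_pos]

lemma ratio_pos : (0:ℝ) < ((1+mm)^2)⁻¹ := by
  apply inv_pos.2
  nlinarith [mm_pos]

/-- two points in all hulls of σ agree -/
lemma xval_unique {σ : ℕ → ℕ} (hσ : Gs σ) {z : ℝ}
    (hz : ∀ k, xlo (pre σ k) ≤ z ∧ z ≤ xhi (pre σ k)) : z = xval σ := by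
  by_contra hne
  have habs : 0 < |z - xval σ| := abs_pos.2 (sub_ne_zero.2 hne)
  have hten : Filter.Tendsto (fun k : ℕ => (MM - mm) * (((1+mm)^2)⁻¹) ^ k)
      Filter.atTop (nhds 0) := by
    rw [show (0:ℝ) = (MM - mm) * 0 by ring]
    exact (tendsto_pow_atTop_nhds_zero_of_lt_one ratio_pos.le ratio_lt_one).const_mul _
  obtain ⟨k, hk⟩ := ((hten.eventually (eventually_lt_nhds habs)).exists)
  have h1 := hz k
  have h2 := xval_ge hσ k
  have h3 := xval_le hσ k
  have h4 := hull_width (Gs_pre hσ k)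
  rw [pre_length] at h4
  have : |z - xval σ| ≤ xhi (pre σ k) - xlo (pre σ k) :=
    abs_sub_le_iff.2 ⟨by linarith [h1.1, h1.2, h2, h3], by linarith [h1.1, h1.2, h2, h3]⟩
  linarith

lemma xlo_cons {a : ℕ} (ha : 1 ≤ a ∧ a ≤ 4) {w : List ℕ} (hw : Good w) :
    xlo (a :: w) = gg a (xhi w) ∧ xhi (a :: w) = gg a (xlo w) := by
  have h1 := hh_mem hw mm_mem_Icm
  have h2 := hh_mem hw MM_mem_Icm
  rcases le_total (hh w mm) (hh w MM) with hc | hc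
  · have := gg_anti_le ha.1 (Icm_pos h1) (Icm_pos h2) hc
    constructor
    · simp [xlo, xhi, hh_cons, min_eq_right this, max_eq_right hc]
    · simp [xlo, xhi, hh_cons, max_eq_left this, min_eq_left hc]
  · have := gg_anti_le ha.1 (Icm_pos h2) (Icm_pos h1) hc
    constructor
    · simp [xlo, xhi, hh_cons, min_eq_left this, max_eq_left hc]
    · simp [xlo, xhi, hh_cons, max_eq_right this, min_eq_right hc]

lemma xval_cons {σ : ℕ → ℕ} (hσ : Gs σ) :
    xval σ = gg (σ 0) (xval (fun i => σ (i+1))) := by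
  set τ := fun i => σ (i+1) with hτ
  have hτg : Gs τ := Gs_tail hσ
  have hmem : xval τ ∈ Icm := xval_mem_Icm hτg
  have hmem2 : gg (σ 0) (xval τ) ∈ Icm := gg_mem (hσ 0) hmem
  refine (xval_unique hσ (fun k => ?_)).symm
  cases k with
  | zero =>
      constructor
      · have e : xlo (pre σ 0) = mm := by simp [xlo, min_eq_left mm_lt_MM.le]
        rw [e]; exact (mem_Icm.1 hmem2).1
      · have e : xhi (pre σ 0) = MM := by simp [xhi, max_eq_right mm_lt_MM.le]
        rw [e]; exact (mem_Icm.1 hmem2).2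
  | succ k =>
      rw [pre_succ_cons]
      obtain ⟨e1, e2⟩ := xlo_cons (hσ 0) (Gs_pre hτg k)
      rw [e1, e2]
      have hl := xval_ge hτg k
      have hr := xval_le hτg k
      have hwl := xlo_mem_Icm (Gs_pre hτg k)
      have hwh := xhi_mem_Icm (Gs_pre hτg k)
      constructor
      · exact gg_anti_le (hσ 0).1 (Icm_pos hmem) (Icm_pos hwh) hr
      · exact gg_anti_le (hσ 0).1 (Icm_pos hwl) (Icm_pos hmem) hl

def Aset : Set ℝ := {x | ∃ σ, Gs σ ∧ x = xval σ}

lemma Aset_sub_Icm : Aset ⊆ Icm := by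
  rintro x ⟨σ, hσ, rfl⟩
  exact xval_mem_Icm hσ

def seqCons (a : ℕ) (σ : ℕ → ℕ) : ℕ → ℕ := fun i => Nat.casesOn i a σ

@[simp] lemma seqCons_zero (a : ℕ) (σ : ℕ → ℕ) : seqCons a σ 0 = a := rfl
@[simp] lemma seqCons_succ (a : ℕ) (σ : ℕ → ℕ) (i : ℕ) : seqCons a σ (i+1) = σ i := rfl

lemma Gs_seqCons {a : ℕ} (ha : 1 ≤ a ∧ a ≤ 4) {σ : ℕ → ℕ} (hσ : Gs σ) :
    Gs (seqCons a σ) := by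
  intro i
  cases i with
  | zero => exact ha
  | succ i => exact hσ i

lemma xval_seqCons {a : ℕ} (ha : 1 ≤ a ∧ a ≤ 4) {σ : ℕ → ℕ} (hσ : Gs σ) :
    xval (seqCons a σ) = gg a (xval σ) := by
  have := xval_cons (Gs_seqCons ha hσ)
  simpa using this

def seqApp (w : List ℕ) (σ : ℕ → ℕ) : ℕ → ℕ := List.foldr seqCons σ w

lemma Gs_seqApp {w : List ℕ} (hw : Good w) {σ : ℕ → ℕ} (hσ : Gs σ) : Gs (seqApp w σ) := by
  induction w with
  | nil => exact hσ
  | cons a w ih =>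
      rw [Good_cons] at hw
      exact Gs_seqCons hw.1 (ih hw.2)

lemma hh_xval {w : List ℕ} (hw : Good w) {σ : ℕ → ℕ} (hσ : Gs σ) :
    hh w (xval σ) = xval (seqApp w σ) := by
  induction w with
  | nil => rfl
  | cons a w ih =>
      rw [Good_cons] at hw
      rw [hh_cons, ih hw.2, ← xval_seqCons hw.1 (Gs_seqApp hw.2 hσ)]
      rfl

noncomputable def per41 : ℕ → ℕ := fun i => if Even i then 4 else 1
noncomputable def per14 : ℕ → ℕ := fun i => if Even i then 1 else 4

lemma Gs_per41 : Gs per41 := by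
  intro i; unfold per41; split <;> norm_num
lemma Gs_per14 : Gs per14 := by
  intro i; unfold per14; split <;> norm_num

lemma mm_fixed : ∀ k, (Even k → hh (pre per41 k) mm = mm) ∧
    (¬ Even k → hh (pre per41 k) MM = mm) := by
  intro k
  induction k with
  | zero => exact ⟨fun _ => rfl, fun h => absurd (Even.zero) h⟩
  | succ k ih =>
      rw [pre_succ_append]
      constructor
      · intro he
        have hko : ¬ Even k := by rw [Nat.even_add_one] at he; exact he
        have : per41 k = 1 := if_neg hko
        rw [this, hh_append, p7_eq]
        exact ih.2 hko
      · intro ho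
        have hke : Even k := by
          rcases Nat.even_or_odd k with h | h
          · exact h
          · exfalso; exact ho (Nat.even_add_one.2 (Nat.not_even_iff_odd.2 h))
        have : per41 k = 4 := if_pos hke
        rw [this, hh_append, p0_eq]
        exact ih.1 hke

lemma MM_fixed : ∀ k, (Even k → hh (pre per14 k) MM = MM) ∧
    (¬ Even k → hh (pre per14 k) mm = MM) := by
  intro k
  induction k with
  | zero => exact ⟨fun _ => rfl, fun h => absurd (Even.zero) h⟩
  | succ k ih =>
      rw [pre_succ_append]
      constructor
      · intro he
        have hko : ¬ Even k := by rw [Nat.even_add_one] at he; exact he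
        have : per14 k = 4 := if_neg hko
        rw [this, hh_append, p0_eq]
        exact ih.2 hko
      · intro ho
        have hke : Even k := by
          rcases Nat.even_or_odd k with h | h
          · exact h
          · exfalso; exact ho (Nat.even_add_one.2 (Nat.not_even_iff_odd.2 h))
        have : per14 k = 1 := if_pos hke
        rw [this, hh_append, p7_eq]
        exact ih.1 hke

lemma mm_mem_Aset : mm ∈ Aset := by
  refine ⟨per41, Gs_per41, ?_⟩
  apply xval_unique Gs_per41
  intro k
  rcases Nat.even_or_odd k with he | ho
  · have := (mm_fixed k).1 he
    rw [← this]
    exact hh_between (Gs_pre Gs_per41 k) mm_mem_Icm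
  · have := (mm_fixed k).2 (Nat.not_even_iff_odd.2 ho)
    rw [← this]
    exact hh_between (Gs_pre Gs_per41 k) MM_mem_Icm

lemma MM_mem_Aset : MM ∈ Aset := by
  refine ⟨per14, Gs_per14, ?_⟩
  apply xval_unique Gs_per14
  intro k
  rcases Nat.even_or_odd k with he | ho
  · have := (MM_fixed k).1 he
    rw [← this]
    exact hh_between (Gs_pre Gs_per14 k) MM_mem_Icm
  · have := (MM_fixed k).2 (Nat.not_even_iff_odd.2 ho)
    rw [← this]
    exact hh_between (Gs_pre Gs_per14 k) mm_mem_Icm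

lemma hh_mem_Aset {w : List ℕ} (hw : Good w) {x : ℝ} (hx : x ∈ Aset) : hh w x ∈ Aset := by
  obtain ⟨σ, hσ, rfl⟩ := hx
  rw [hh_xval hw hσ]
  exact ⟨_, Gs_seqApp hw hσ, rfl⟩

lemma xlo_mem_Aset {w : List ℕ} (hw : Good w) : xlo w ∈ Aset := by
  rcases min_choice (hh w mm) (hh w MM) with h | h
  · rw [show xlo w = hh w mm from h]
    exact hh_mem_Aset hw mm_mem_Aset
  · rw [show xlo w = hh w MM from h]
    exact hh_mem_Aset hw MM_mem_Aset

lemma xhi_mem_Aset {w : List ℕ} (hw : Good w) : xhi w ∈ Aset := by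
  rcases max_choice (hh w mm) (hh w MM) with h | h
  · rw [show xhi w = hh w mm from h]
    exact hh_mem_Aset hw mm_mem_Aset
  · rw [show xhi w = hh w MM from h]
    exact hh_mem_Aset hw MM_mem_Aset

-- ===== Section 5 : gaps =====

lemma gg_image_sep {a b : ℕ} (hb : 1 ≤ b) (ha4 : a ≤ 4) (hba : b < a) :
    gg a mm < gg b MM := by
  have hb3 : b ≤ 3 := by omega
  have h1 : gg a mm ≤ gg (b+1) mm := gg_digit_anti (by omega) (by omega) mm_pos
  have h2 : gg (b+1) mm < gg b MM := by
    interval_cases b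
    · exact ord56
    · exact ord34
    · exact ord12
  linarith

lemma xlo_append (w : List ℕ) (a : ℕ) :
    xlo (w ++ [a]) = min (hh w (gg a mm)) (hh w (gg a MM)) := by
  rw [xlo, hh_append, hh_append]
lemma xhi_append (w : List ℕ) (a : ℕ) :
    xhi (w ++ [a]) = max (hh w (gg a mm)) (hh w (gg a MM)) := by
  rw [xhi, hh_append, hh_append]

lemma child_endpoints_even {w : List ℕ} (hw : Good w) (he : Even w.length)
    {a : ℕ} (ha : 1 ≤ a ∧ a ≤ 4) :
    xlo (w ++ [a]) = hh w (gg a MM) ∧ xhi (w ++ [a]) = hh w (gg a mm) := by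
  have h1 : gg a MM < gg a mm := gg_anti ha.1 mm_pos (lt_trans mm_pos mm_lt_MM) mm_lt_MM
  have m1 := gg_mem ha mm_mem_Icm
  have m2 := gg_mem ha MM_mem_Icm
  have := hh_strict_mono_even hw he m2 m1 h1
  rw [xlo_append, xhi_append]
  exact ⟨min_eq_right this.le, max_eq_left this.le⟩

lemma child_endpoints_odd {w : List ℕ} (hw : Good w) (he : ¬ Even w.length)
    {a : ℕ} (ha : 1 ≤ a ∧ a ≤ 4) :
    xlo (w ++ [a]) = hh w (gg a mm) ∧ xhi (w ++ [a]) = hh w (gg a MM) := by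
  have h1 : gg a MM < gg a mm := gg_anti ha.1 mm_pos (lt_trans mm_pos mm_lt_MM) mm_lt_MM
  have m1 := gg_mem ha mm_mem_Icm
  have m2 := gg_mem ha MM_mem_Icm
  have := hh_strict_anti_odd hw he m2 m1 h1
  rw [xlo_append, xhi_append]
  exact ⟨min_eq_left this.le, max_eq_right this.le⟩

/-- order of children : even parity reverses digit order -/
lemma child_order_even {w : List ℕ} (hw : Good w) (he : Even w.length)
    {b a : ℕ} (hb : 1 ≤ b ∧ b ≤ 4) (ha : 1 ≤ a ∧ a ≤ 4) (hba : b < a) :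
    xhi (w ++ [a]) < xlo (w ++ [b]) := by
  rw [(child_endpoints_even hw he ha).2, (child_endpoints_even hw he hb).1]
  exact hh_strict_mono_even hw he (gg_mem ha mm_mem_Icm) (gg_mem hb MM_mem_Icm)
    (gg_image_sep hb.1 ha.2 hba)

lemma child_order_odd {w : List ℕ} (hw : Good w) (he : ¬ Even w.length)
    {b a : ℕ} (hb : 1 ≤ b ∧ b ≤ 4) (ha : 1 ≤ a ∧ a ≤ 4) (hba : b < a) :
    xhi (w ++ [b]) < xlo (w ++ [a]) := by
  rw [(child_endpoints_odd hw he hb).2, (child_endpoints_odd hw he ha).1]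
  exact hh_strict_anti_odd hw he (gg_mem ha mm_mem_Icm) (gg_mem hb MM_mem_Icm)
    (gg_image_sep hb.1 ha.2 hba)

/-- distinct same-length cylinders are disjoint -/
lemma hull_disjoint : ∀ {w w' : List ℕ}, Good w → Good w' → w.length = w'.length →
    w ≠ w' → xhi w < xlo w' ∨ xhi w' < xlo w := by
  intro w
  induction w with
  | nil =>
      intro w' _ _ hlen hne
      exfalso
      exact hne (by simpa using (List.length_eq_zero_iff.1 hlen.symm).symm)
  | cons a w ih =>
      intro w' hw hw' hlen hne
      cases w' with
      | nil => simp at hlen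
      | cons b w'' =>
          rw [Good_cons] at hw hw'
          simp only [List.length_cons, Nat.add_right_cancel_iff] at hlen
          rcases Nat.lt_trichotomy a b with hab | hab | hab
          · right
            obtain ⟨e1, e2⟩ := xlo_cons hw'.1 hw'.2
            obtain ⟨e3, e4⟩ := xlo_cons hw.1 hw.2
            rw [e2, e3]
            have h1 : gg b (xlo w'') ≤ gg b mm :=
              gg_anti_le hw'.1.1 mm_pos (Icm_pos (xlo_mem_Icm hw'.2)) (mem_Icm.1 (xlo_mem_Icm hw'.2)).1
            have h2 : gg a MM ≤ gg a (xhi w) :=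
              gg_anti_le hw.1.1 (Icm_pos (xhi_mem_Icm hw.2)) (lt_trans mm_pos mm_lt_MM)
                (mem_Icm.1 (xhi_mem_Icm hw.2)).2
            have hsep := gg_image_sep hw.1.1 hw'.1.2 hab
            linarith
          · subst hab
            have hwne : w ≠ w'' := by
              intro h; exact hne (by rw [h])
            rcases ih hw.2 hw'.2 hlen hwne with h | h
            · right
              obtain ⟨e1, e2⟩ := xlo_cons hw.1 hw.2
              obtain ⟨e3, e4⟩ := xlo_cons hw'.1 hw'.2
              rw [e4, e1]
              exact gg_anti hw.1.1 (Icm_pos (xhi_mem_Icm hw.2)) (Icm_pos (xlo_mem_Icm hw'.2)) h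
            · left
              obtain ⟨e1, e2⟩ := xlo_cons hw.1 hw.2
              obtain ⟨e3, e4⟩ := xlo_cons hw'.1 hw'.2
              rw [e2, e3]
              exact gg_anti hw.1.1 (Icm_pos (xhi_mem_Icm hw'.2)) (Icm_pos (xlo_mem_Icm hw.2)) h
          · left
            obtain ⟨e1, e2⟩ := xlo_cons hw'.1 hw'.2
            obtain ⟨e3, e4⟩ := xlo_cons hw.1 hw.2
            rw [e4, e1]
            have h1 : gg a (xlo w) ≤ gg a mm :=
              gg_anti_le hw.1.1 mm_pos (Icm_pos (xlo_mem_Icm hw.2)) (mem_Icm.1 (xlo_mem_Icm hw.2)).1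
            have h2 : gg b MM ≤ gg b (xhi w'') :=
              gg_anti_le hw'.1.1 (Icm_pos (xhi_mem_Icm hw'.2)) (lt_trans mm_pos mm_lt_MM)
                (mem_Icm.1 (xhi_mem_Icm hw'.2)).2
            have hsep := gg_image_sep hw'.1.1 hw.1.2 hab
            linarith

/-- a point of Aset inside a cylinder hull lies in a child hull -/
lemma Aset_into_child {w : List ℕ} (hw : Good w) {y : ℝ} (hy : y ∈ Aset)
    (h1 : xlo w ≤ y) (h2 : y ≤ xhi w) :
    ∃ c, (1 ≤ c ∧ c ≤ 4) ∧ xlo (w ++ [c]) ≤ y ∧ y ≤ xhi (w ++ [c]) := by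
  obtain ⟨σ, hσ, rfl⟩ := hy
  have hpre : pre σ w.length = w := by
    by_contra hne
    rcases hull_disjoint (Gs_pre hσ w.length) hw (pre_length σ w.length) hne with h | h
    · exact absurd (xval_le hσ w.length) (by linarith)
    · exact absurd (xval_ge hσ w.length) (by linarith)
  refine ⟨σ w.length, hσ w.length, ?_, ?_⟩
  · have := xval_ge hσ (w.length + 1)
    rwa [pre_succ_append, hpre] at this
  · have := xval_le hσ (w.length + 1)
    rwa [pre_succ_append, hpre] at this

/-- no point of Aset lies in the gap between adjacent children -/
lemma gap_free_even {w : List ℕ} (hw : Good w) (he : Even w.length)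
    {aR : ℕ} (haR : 1 ≤ aR ∧ aR ≤ 3) :
    ∀ y ∈ Aset, ¬ (xhi (w ++ [aR+1]) < y ∧ y < xlo (w ++ [aR])) := by
  rintro y hy ⟨hy1, hy2⟩
  have haL : 1 ≤ aR+1 ∧ aR+1 ≤ 4 := by omega
  have haR' : 1 ≤ aR ∧ aR ≤ 4 := by omega
  have hin1 : xlo w ≤ y := le_trans (le_trans (hull_mono hw haL).1 (xlo_le_xhi _)) hy1.le
  have hin2 : y ≤ xhi w := le_trans hy2.le (le_trans (xlo_le_xhi _) (hull_mono hw haR').2)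
  obtain ⟨c, hc, hc1, hc2⟩ := Aset_into_child hw hy hin1 hin2
  rcases Nat.lt_trichotomy c aR with h | h | h
  · have := child_order_even hw he hc haR' h
    linarith [xlo_le_xhi (w ++ [aR])]
  · subst h; linarith
  · rcases Nat.lt_or_ge c (aR+1) with h' | h'
    · omega
    · rcases Nat.eq_or_lt_of_le h' with h'' | h''
      · subst h''; linarith
      · have := child_order_even hw he haL hc h''
        linarith [xlo_le_xhi (w ++ [aR+1])]

lemma gap_free_odd {w : List ℕ} (hw : Good w) (he : ¬ Even w.length)
    {aL : ℕ} (haL : 1 ≤ aL ∧ aL ≤ 3) :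
    ∀ y ∈ Aset, ¬ (xhi (w ++ [aL]) < y ∧ y < xlo (w ++ [aL+1])) := by
  rintro y hy ⟨hy1, hy2⟩
  have haR : 1 ≤ aL+1 ∧ aL+1 ≤ 4 := by omega
  have haL' : 1 ≤ aL ∧ aL ≤ 4 := by omega
  have hin1 : xlo w ≤ y := le_trans (le_trans (hull_mono hw haL').1 (xlo_le_xhi _)) hy1.le
  have hin2 : y ≤ xhi w := le_trans hy2.le (le_trans (xlo_le_xhi _) (hull_mono hw haR).2)
  obtain ⟨c, hc, hc1, hc2⟩ := Aset_into_child hw hy hin1 hin2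
  rcases Nat.lt_trichotomy c aL with h | h | h
  · have := child_order_odd hw he hc haL' h
    linarith [xlo_le_xhi (w ++ [aL])]
  · subst h; linarith
  · rcases Nat.eq_or_lt_of_le h with h'' | h''
    · subst h''; linarith
    · have := child_order_odd hw he haR hc h''
      linarith [xlo_le_xhi (w ++ [aL+1])]

/-- gap data located around a point -/
def GapAt (w₀ : List ℕ) (z : ℝ) : Prop :=
  ∃ wL wR : List ℕ, Good wL ∧ Good wR ∧
    xlo w₀ ≤ xlo wL ∧ xhi wR ≤ xhi w₀ ∧
    xhi wL < z ∧ z < xlo wR ∧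
    xlo wR - xhi wL ≤ γ * (xhi wL - xlo wL) ∧
    xlo wR - xhi wL ≤ γ * (xhi wR - xlo wR) ∧
    (∀ y ∈ Aset, ¬ (xhi wL < y ∧ y < xlo wR))

lemma GapAt_mono {w₀ w : List ℕ} {z : ℝ} (h1 : xlo w₀ ≤ xlo w) (h2 : xhi w ≤ xhi w₀)
    (h : GapAt w z) : GapAt w₀ z := by
  obtain ⟨wL, wR, g1, g2, g3, g4, g5, g6, g7, g8, g9⟩ := h
  exact ⟨wL, wR, g1, g2, le_trans h1 g3, le_trans g4 h2, g5, g6, g7, g8, g9⟩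

lemma Good_child {w : List ℕ} (hw : Good w) {c : ℕ} (hc : 1 ≤ c ∧ c ≤ 4) :
    Good (w ++ [c]) := by
  rw [Good_append]
  exact ⟨hw, by intro a ha; simp at ha; subst ha; exact hc⟩

lemma d1' : (1:ℕ) ≤ 1 ∧ (1:ℕ) ≤ 4 := by norm_num
lemma d2' : (1:ℕ) ≤ 2 ∧ (2:ℕ) ≤ 4 := by norm_num
lemma d3' : (1:ℕ) ≤ 3 ∧ (3:ℕ) ≤ 4 := by norm_num
lemma d4' : (1:ℕ) ≤ 4 ∧ (4:ℕ) ≤ 4 := by norm_num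

lemma pmem0 : mm ∈ Icm := mm_mem_Icm
lemma pmem1 : gg 4 mm ∈ Icm := gg_mem d4' mm_mem_Icm
lemma pmem2 : gg 3 MM ∈ Icm := gg_mem d3' MM_mem_Icm
lemma pmem3 : gg 3 mm ∈ Icm := gg_mem d3' mm_mem_Icm
lemma pmem4 : gg 2 MM ∈ Icm := gg_mem d2' MM_mem_Icm
lemma pmem5 : gg 2 mm ∈ Icm := gg_mem d2' mm_mem_Icm
lemma pmem6 : gg 1 MM ∈ Icm := gg_mem d1' MM_mem_Icm
lemma pmem7 : MM ∈ Icm := MM_mem_Icm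

lemma step_lemma {w : List ℕ} (hw : Good w) {z : ℝ} (hz1 : xlo w ≤ z) (hz2 : z ≤ xhi w) :
    (∃ c, (1 ≤ c ∧ c ≤ 4) ∧ xlo (w ++ [c]) ≤ z ∧ z ≤ xhi (w ++ [c])) ∨ GapAt w z := by
  rcases Nat.even_or_odd w.length with he | ho
  · -- even parity : children in x-order are 4,3,2,1
    obtain ⟨E4l, E4h⟩ := child_endpoints_even hw he d4'
    obtain ⟨E3l, E3h⟩ := child_endpoints_even hw he d3'
    obtain ⟨E2l, E2h⟩ := child_endpoints_even hw he d2'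
    obtain ⟨E1l, E1h⟩ := child_endpoints_even hw he d1'
    have eq4lo : xlo (w ++ [4]) = xlo w := by rw [E4l, p0_eq, (xlo_even hw he).1]
    have eq1hi : xhi (w ++ [1]) = xhi w := by rw [E1h, p7_eq, (xlo_even hw he).2]
    -- monotone chain of the 8 points
    have q01 := hh_strict_mono_even hw he pmem0 pmem1 ord01
    have q12 := hh_strict_mono_even hw he pmem1 pmem2 ord12
    have q23 := hh_strict_mono_even hw he pmem2 pmem3 ord23
    have q34 := hh_strict_mono_even hw he pmem3 pmem4 ord34
    have q45 := hh_strict_mono_even hw he pmem4 pmem5 ord45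
    have q56 := hh_strict_mono_even hw he pmem5 pmem6 ord56
    have q67 := hh_strict_mono_even hw he pmem6 pmem7 ord67
    rcases le_or_gt z (xhi (w ++ [4])) with h4 | h4
    · exact Or.inl ⟨4, d4', by rw [eq4lo]; exact hz1, h4⟩
    rcases lt_or_ge z (xlo (w ++ [3])) with g34 | g34
    · right
      have K := key_abs_L hw pmem0 pmem1 pmem2 S34L1 S34L2 ord01.le ord12.le
      rw [abs_of_nonneg (by linarith), abs_of_nonneg (by linarith)] at K
      have K2 := key_abs_R hw pmem1 pmem2 pmem3 S34R1 S34R2 ord12.le ord23.le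
      rw [abs_of_nonneg (by linarith), abs_of_nonneg (by linarith)] at K2
      refine ⟨w ++ [4], w ++ [3], Good_child hw d4', Good_child hw d3',
        (hull_mono hw d4').1, (hull_mono hw d3').2, h4, g34, ?_, ?_, ?_⟩
      · rw [E4h, E3l, E4l, p0_eq]; linarith
      · rw [E4h, E3l, E3h]; linarith
      · exact gap_free_even hw he ⟨by norm_num, by norm_num⟩
    rcases le_or_gt z (xhi (w ++ [3])) with h3 | h3
    · exact Or.inl ⟨3, d3', g34, h3⟩
    rcases lt_or_ge z (xlo (w ++ [2])) with g23 | g23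
    · right
      have K := key_abs_L hw pmem2 pmem3 pmem4 S23L1 S23L2 ord23.le ord34.le
      rw [abs_of_nonneg (by linarith), abs_of_nonneg (by linarith)] at K
      have K2 := key_abs_R hw pmem3 pmem4 pmem5 S23R1 S23R2 ord34.le ord45.le
      rw [abs_of_nonneg (by linarith), abs_of_nonneg (by linarith)] at K2
      refine ⟨w ++ [3], w ++ [2], Good_child hw d3', Good_child hw d2',
        (hull_mono hw d3').1, (hull_mono hw d2').2, h3, g23, ?_, ?_, ?_⟩
      · rw [E3h, E2l, E3l]; linarith
      · rw [E3h, E2l, E2h]; linarith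
      · exact gap_free_even hw he ⟨by norm_num, by norm_num⟩
    rcases le_or_gt z (xhi (w ++ [2])) with h2 | h2
    · exact Or.inl ⟨2, d2', g23, h2⟩
    rcases lt_or_ge z (xlo (w ++ [1])) with g12 | g12
    · right
      have K := key_abs_L hw pmem4 pmem5 pmem6 S12L1 S12L2 ord45.le ord56.le
      rw [abs_of_nonneg (by linarith), abs_of_nonneg (by linarith)] at K
      have K2 := key_abs_R hw pmem5 pmem6 pmem7 S12R1 S12R2 ord56.le ord67.le
      rw [abs_of_nonneg (by linarith), abs_of_nonneg (by linarith)] at K2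
      refine ⟨w ++ [2], w ++ [1], Good_child hw d2', Good_child hw d1',
        (hull_mono hw d2').1, (hull_mono hw d1').2, h2, g12, ?_, ?_, ?_⟩
      · rw [E2h, E1l, E2l]; linarith
      · rw [E2h, E1l, E1h, p7_eq]; linarith
      · exact gap_free_even hw he ⟨by norm_num, by norm_num⟩
    · exact Or.inl ⟨1, d1', g12, hz2.trans (le_of_eq eq1hi.symm)⟩
  · -- odd parity : children in x-order are 1,2,3,4
    have he := Nat.not_even_iff_odd.2 ho
    obtain ⟨E4l, E4h⟩ := child_endpoints_odd hw he d4'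
    obtain ⟨E3l, E3h⟩ := child_endpoints_odd hw he d3'
    obtain ⟨E2l, E2h⟩ := child_endpoints_odd hw he d2'
    obtain ⟨E1l, E1h⟩ := child_endpoints_odd hw he d1'
    have eq1lo : xlo (w ++ [1]) = xlo w := by rw [E1l, p7_eq, (xlo_odd hw he).1]
    have eq4hi : xhi (w ++ [4]) = xhi w := by rw [E4h, p0_eq, (xlo_odd hw he).2]
    -- antitone chain : hh w p7 < ... < hh w p0
    have q01 := hh_strict_anti_odd hw he pmem0 pmem1 ord01
    have q12 := hh_strict_anti_odd hw he pmem1 pmem2 ord12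
    have q23 := hh_strict_anti_odd hw he pmem2 pmem3 ord23
    have q34 := hh_strict_anti_odd hw he pmem3 pmem4 ord34
    have q45 := hh_strict_anti_odd hw he pmem4 pmem5 ord45
    have q56 := hh_strict_anti_odd hw he pmem5 pmem6 ord56
    have q67 := hh_strict_anti_odd hw he pmem6 pmem7 ord67
    rcases le_or_gt z (xhi (w ++ [1])) with h1 | h1
    · exact Or.inl ⟨1, d1', by rw [eq1lo]; exact hz1, h1⟩
    rcases lt_or_ge z (xlo (w ++ [2])) with g12 | g12
    · right
      have K := key_abs_L hw pmem4 pmem5 pmem6 S12L1 S12L2 ord45.le ord56.le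
      rw [abs_of_nonpos (by linarith), abs_of_nonpos (by linarith)] at K
      have K2 := key_abs_R hw pmem5 pmem6 pmem7 S12R1 S12R2 ord56.le ord67.le
      rw [abs_of_nonpos (by linarith), abs_of_nonpos (by linarith)] at K2
      refine ⟨w ++ [1], w ++ [2], Good_child hw d1', Good_child hw d2',
        (hull_mono hw d1').1, (hull_mono hw d2').2, h1, g12, ?_, ?_, ?_⟩
      · rw [E1h, E2l, E1l, p7_eq]; linarith
      · rw [E1h, E2l, E2h]; linarith
      · exact gap_free_odd hw he ⟨by norm_num, by norm_num⟩
    rcases le_or_gt z (xhi (w ++ [2])) with h2 | h2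
    · exact Or.inl ⟨2, d2', g12, h2⟩
    rcases lt_or_ge z (xlo (w ++ [3])) with g23 | g23
    · right
      have K := key_abs_L hw pmem2 pmem3 pmem4 S23L1 S23L2 ord23.le ord34.le
      rw [abs_of_nonpos (by linarith), abs_of_nonpos (by linarith)] at K
      have K2 := key_abs_R hw pmem3 pmem4 pmem5 S23R1 S23R2 ord34.le ord45.le
      rw [abs_of_nonpos (by linarith), abs_of_nonpos (by linarith)] at K2
      refine ⟨w ++ [2], w ++ [3], Good_child hw d2', Good_child hw d3',
        (hull_mono hw d2').1, (hull_mono hw d3').2, h2, g23, ?_, ?_, ?_⟩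
      · rw [E2h, E3l, E2l]; linarith
      · rw [E2h, E3l, E3h]; linarith
      · exact gap_free_odd hw he ⟨by norm_num, by norm_num⟩
    rcases le_or_gt z (xhi (w ++ [3])) with h3 | h3
    · exact Or.inl ⟨3, d3', g23, h3⟩
    rcases lt_or_ge z (xlo (w ++ [4])) with g34 | g34
    · right
      have K := key_abs_L hw pmem0 pmem1 pmem2 S34L1 S34L2 ord01.le ord12.le
      rw [abs_of_nonpos (by linarith), abs_of_nonpos (by linarith)] at K
      have K2 := key_abs_R hw pmem1 pmem2 pmem3 S34R1 S34R2 ord12.le ord23.le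
      rw [abs_of_nonpos (by linarith), abs_of_nonpos (by linarith)] at K2
      refine ⟨w ++ [3], w ++ [4], Good_child hw d3', Good_child hw d4',
        (hull_mono hw d3').1, (hull_mono hw d4').2, h3, g34, ?_, ?_, ?_⟩
      · rw [E3h, E4l, E3l]; linarith
      · rw [E3h, E4l, E4h, p0_eq]; linarith
      · exact gap_free_odd hw he ⟨by norm_num, by norm_num⟩
    · exact Or.inl ⟨4, d4', g34, hz2.trans (le_of_eq eq4hi.symm)⟩

lemma seqApp_pre (w : List ℕ) (σ : ℕ → ℕ) (k : ℕ) :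
    pre (seqApp w σ) (w.length + k) = w ++ pre σ k := by
  induction w with
  | nil => simp [seqApp]
  | cons a w ih =>
      have : (a :: w).length + k = (w.length + k) + 1 := by simp; ring
      rw [this]
      have e : seqApp (a :: w) σ = seqCons a (seqApp w σ) := rfl
      rw [e, pre_succ_cons]
      simp only [seqCons_zero]
      have e2 : (fun i => seqCons a (seqApp w σ) (i+1)) = seqApp w σ := by
        funext i; rfl
      rw [e2, ih]
      rfl

lemma RES {w₀ : List ℕ} (hw₀ : Good w₀) {z : ℝ} (hz1 : xlo w₀ ≤ z) (hz2 : z ≤ xhi w₀)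
    (hzA : z ∉ Aset) : GapAt w₀ z := by
  by_contra hng
  set P : List ℕ → Prop := fun u => Good (w₀ ++ u) ∧ xlo w₀ ≤ xlo (w₀ ++ u) ∧
    xhi (w₀ ++ u) ≤ xhi w₀ ∧ xlo (w₀ ++ u) ≤ z ∧ z ≤ xhi (w₀ ++ u) with hP
  have hstep : ∀ u, P u → ∃ c, ((1 ≤ c ∧ c ≤ 4) ∧ P (u ++ [c])) := by
    intro u hu
    rcases step_lemma hu.1 hu.2.2.2.1 hu.2.2.2.2 with ⟨c, hc, h1, h2⟩ | hgap
    · refine ⟨c, hc, ?_⟩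
      have e : w₀ ++ (u ++ [c]) = (w₀ ++ u) ++ [c] := by rw [List.append_assoc]
      rw [hP]
      simp only [e]
      have hm := hull_mono hu.1 hc
      exact ⟨Good_child hu.1 hc, le_trans hu.2.1 hm.1, le_trans hm.2 hu.2.2.1, h1, h2⟩
    · exact absurd (GapAt_mono hu.2.1 hu.2.2.1 hgap) hng
  have hbase : P [] := by
    rw [hP]
    simp only [List.append_nil]
    exact ⟨hw₀, le_refl _, le_refl _, hz1, hz2⟩
  -- construct the chain
  let W : ℕ → {u : List ℕ // P u} := fun k =>
    Nat.rec ⟨[], hbase⟩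
      (fun _ prev => ⟨prev.1 ++ [(hstep prev.1 prev.2).choose],
        (hstep prev.1 prev.2).choose_spec.2⟩) k
  set τ : ℕ → ℕ := fun k => (hstep (W k).1 (W k).2).choose with hτ
  have hWsucc : ∀ k, (W (k+1)).1 = (W k).1 ++ [τ k] := fun k => rfl
  have hτgood : ∀ k, 1 ≤ τ k ∧ τ k ≤ 4 :=
    fun k => (hstep (W k).1 (W k).2).choose_spec.1
  have hGτ : Gs τ := hτgood
  have hpre : ∀ k, pre τ k = (W k).1 := by
    intro k
    induction k with
    | zero => rfl
    | succ k ih => rw [pre_succ_append, ih, hWsucc]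
  set σ : ℕ → ℕ := seqApp w₀ τ with hσ
  have hGσ : Gs σ := Gs_seqApp hw₀ hGτ
  have hmem : ∀ n, xlo (pre σ n) ≤ z ∧ z ≤ xhi (pre σ n) := by
    intro n
    rcases le_or_gt n w₀.length with hn | hn
    · have e : pre σ w₀.length = w₀ := by
        have := seqApp_pre w₀ τ 0
        simpa using this
      constructor
      · exact le_trans (le_trans (xlo_pre_mono hGσ hn) (le_of_eq (congrArg xlo e))) hz1
      · exact le_trans hz2 (le_trans (le_of_eq (congrArg xhi e).symm) (xhi_pre_anti hGσ hn))
    · have e : n = w₀.length + (n - w₀.length) := by omega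
      rw [e, seqApp_pre w₀ τ (n - w₀.length), hpre]
      have hp := (W (n - w₀.length)).2
      exact ⟨hp.2.2.2.1, hp.2.2.2.2⟩
  exact hzA ⟨σ, hGσ, xval_unique hGσ hmem⟩

-- ===== Section 6 : the marching construction =====

lemma xlo_nil : xlo [] = mm := by simp [xlo, min_eq_left mm_lt_MM.le]
lemma xhi_nil : xhi [] = MM := by simp [xhi, max_eq_right mm_lt_MM.le]

structure St (t : ℝ) : Type where
  flag : Bool
  pHi : ℝ
  qLo : ℝ
  qHi : ℝ
  wP : List ℕ
  wQ : List ℕ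
  hGP : Good wP
  hGQ : Good wQ
  hpHi : pHi = if flag = true then xlo wP else t - xhi wP
  hqHi : qHi = if flag = true then t - xhi wQ else xlo wQ
  hq1 : if flag = true then (t - qLo ∈ Aset ∧ t - qHi ∈ Aset) else (qLo ∈ Aset ∧ qHi ∈ Aset)
  h1 : qLo ≤ pHi
  h2 : pHi < qHi
  h3 : qHi - qLo ≤ xhi wP - xlo wP
  h4 : qHi - qLo ≤ xhi wQ - xlo wQ

lemma march {t : ℝ} (hcon : ∀ x, x ∈ Aset → t - x ∉ Aset) (s : St t) :
    ∃ s' : St t, s'.flag = !s.flag ∧ s'.pHi = s.qHi ∧ s.qHi < s'.qHi ∧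
      s'.qHi - s'.qLo ≤ γ * (s.qHi - s.qLo) := by
  obtain ⟨flag, pHi, qLo, qHi, wP, wQ, hGP, hGQ, hpHi, hqHi, hq1, h1, h2, h3, h4⟩ := s
  cases flag with
  | true =>
      rw [if_pos rfl] at hpHi hqHi hq1
      have hzA : qHi ∉ Aset := fun h => hcon qHi h hq1.2
      have hz1 : xlo wP ≤ qHi := by rw [← hpHi]; exact h2.le
      have hz2 : qHi ≤ xhi wP := by
        have h5 : xlo wP = pHi := hpHi.symm
        linarith
      obtain ⟨wL, wR, gL, gR, gc1, gc2, gp1, gp2, gF3, gF2, gF4⟩ := RES hGP hz1 hz2 hzA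
      have hlenpos : 0 < qHi - qLo := by linarith
      have hcontr : xlo wR - xhi wL ≤ γ * (qHi - qLo) := by
        have h5 : xhi wL - xlo wL ≤ xhi wL - xlo wP := by linarith [gc1]
        have h6 : xhi wL - xlo wP ≤ qHi - qLo := by
          have h7 : xlo wP = pHi := hpHi.symm
          linarith
        nlinarith [gamma_pos, gF3]
      refine ⟨⟨false, qHi, xhi wL, xlo wR, wQ, wR, hGQ, gR, ?_, ?_, ?_, gp1.le, gp2, ?_, ?_⟩,
        by simp, rfl, gp2, hcontr⟩
      · rw [if_neg (by decide)]
        exact hqHi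
      · rw [if_neg (by decide)]
      · rw [if_neg (by decide)]
        exact ⟨xhi_mem_Aset gL, xlo_mem_Aset gR⟩
      · calc xlo wR - xhi wL ≤ γ * (qHi - qLo) := hcontr
          _ ≤ qHi - qLo := by nlinarith [gamma_pos, gamma_lt_one]
          _ ≤ xhi wQ - xlo wQ := h4
      · calc xlo wR - xhi wL ≤ γ * (xhi wR - xlo wR) := gF2
          _ ≤ xhi wR - xlo wR := by nlinarith [gamma_pos, gamma_lt_one, xlo_le_xhi wR]
  | false =>
      rw [if_neg (by decide)] at hpHi hqHi hq1
      have hzA : t - qHi ∉ Aset := hcon qHi hq1.2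
      have hzb1 : xlo wP ≤ t - qHi := by
        have h5 : pHi = t - xhi wP := hpHi
        linarith
      have hzb2 : t - qHi ≤ xhi wP := by
        have h5 : pHi = t - xhi wP := hpHi
        linarith
      obtain ⟨wL, wR, gL, gR, gc1, gc2, gp1, gp2, gF3, gF2, gF4⟩ := RES hGP hzb1 hzb2 hzA
      have hlenpos : 0 < qHi - qLo := by linarith
      have hcontr : (t - xhi wL) - (t - xlo wR) ≤ γ * (qHi - qLo) := by
        have e1 : (t - xhi wL) - (t - xlo wR) = xlo wR - xhi wL := by ring
        rw [e1]
        have h6 : xhi wR - xlo wR ≤ xhi wP - xlo wR := by linarith [gc2]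
        have h7 : xhi wP - xlo wR ≤ qHi - qLo := by
          have e2 : pHi = t - xhi wP := hpHi
          linarith [gp2]
        nlinarith [gamma_pos, gF2]
      refine ⟨⟨true, qHi, t - xlo wR, t - xhi wL, wQ, wL, hGQ, gL, ?_, ?_, ?_, ?_, ?_, ?_, ?_⟩,
        by simp, rfl, by show qHi < t - xhi wL; linarith [gp1], hcontr⟩
      · rw [if_pos rfl]
        exact hqHi
      · rw [if_pos rfl]
      · rw [if_pos rfl]
        constructor
        · have e : t - (t - xlo wR) = xlo wR := by ring
          rw [e]; exact xlo_mem_Aset gR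
        · have e : t - (t - xhi wL) = xhi wL := by ring
          rw [e]; exact xhi_mem_Aset gL
      · linarith [gp2]
      · linarith [gp1]
      · have e1 : (t - xhi wL) - (t - xlo wR) = xlo wR - xhi wL := by ring
        rw [e1]
        calc xlo wR - xhi wL ≤ γ * (qHi - qLo) := by linarith [hcontr]
          _ ≤ qHi - qLo := by nlinarith [gamma_pos, gamma_lt_one]
          _ ≤ xhi wQ - xlo wQ := h4
      · have e1 : (t - xhi wL) - (t - xlo wR) = xlo wR - xhi wL := by ring
        rw [e1]
        calc xlo wR - xhi wL ≤ γ * (xhi wL - xlo wL) := gF3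
          _ ≤ xhi wL - xlo wL := by nlinarith [gamma_pos, gamma_lt_one, xlo_le_xhi wL]

lemma init {t : ℝ} (h2m : 2*mm ≤ t) (h2M : t ≤ 2*MM)
    (hcon : ∀ x, x ∈ Aset → t - x ∉ Aset) : Nonempty (St t) := by
  have hz0 : t/2 ∉ Aset := by
    intro h
    exact hcon (t/2) h (by rw [show t - t/2 = t/2 by ring]; exact h)
  have hz1 : xlo [] ≤ t/2 := by rw [xlo_nil]; linarith
  have hz2 : t/2 ≤ xhi [] := by rw [xhi_nil]; linarith
  obtain ⟨wL, wR, gL, gR, gc1, gc2, gp1, gp2, gF3, gF2, gF4⟩ := RES Good_nil hz1 hz2 hz0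
  have hALo : xhi wL ∈ Aset := xhi_mem_Aset gL
  have hAHi : xlo wR ∈ Aset := xlo_mem_Aset gR
  have hlwl := xlo_le_xhi wL
  have hlwr := xlo_le_xhi wR
  rcases lt_trichotomy t (xhi wL + xlo wR) with hmid | hmid | hmid
  · -- B-gap on the left, A-gap on the right : flag = false
    refine ⟨⟨false, t - xhi wL, xhi wL, xlo wR, wL, wR, gL, gR, ?_, ?_, ?_, ?_, ?_, ?_, ?_⟩⟩
    · rw [if_neg (by decide)]
    · rw [if_neg (by decide)]
    · rw [if_neg (by decide)]
      exact ⟨hALo, hAHi⟩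
    · linarith
    · linarith
    · nlinarith [gamma_pos, gamma_lt_one, gF3]
    · nlinarith [gamma_pos, gamma_lt_one, gF2]
  · exfalso
    exact hcon (xlo wR) hAHi (by rw [show t - xlo wR = xhi wL by linarith]; exact hALo)
  · -- A-gap on the left, B-gap on the right : flag = true
    refine ⟨⟨true, xlo wR, t - xlo wR, t - xhi wL, wR, wL, gR, gL, ?_, ?_, ?_, ?_, ?_, ?_, ?_⟩⟩
    · rw [if_pos rfl]
    · rw [if_pos rfl]
    · rw [if_pos rfl]
      constructor
      · rw [show t - (t - xlo wR) = xlo wR by ring]; exact hAHi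
      · rw [show t - (t - xhi wL) = xhi wL by ring]; exact hALo
    · linarith
    · linarith
    · have e : (t - xhi wL) - (t - xlo wR) = xlo wR - xhi wL := by ring
      rw [e]
      nlinarith [gamma_pos, gamma_lt_one, gF2]
    · have e : (t - xhi wL) - (t - xlo wR) = xlo wR - xhi wL := by ring
      rw [e]
      nlinarith [gamma_pos, gamma_lt_one, gF3]

lemma hall_exists {t : ℝ} (h2m : 2*mm ≤ t) (h2M : t ≤ 2*MM) :
    ∃ p, p ∈ Aset ∧ t - p ∈ Aset := by
  by_contra hcc
  push_neg at hcc
  have hc : ∀ x, x ∈ Aset → t - x ∉ Aset := hcc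
  obtain ⟨s0⟩ := init h2m h2M hc
  let C : ℕ → St t := fun n => Nat.rec s0 (fun _ s => (march hc s).choose) n
  have hspec : ∀ n, (C (n+1)).flag = !(C n).flag ∧ (C (n+1)).pHi = (C n).qHi ∧
      (C n).qHi < (C (n+1)).qHi ∧
      (C (n+1)).qHi - (C (n+1)).qLo ≤ γ * ((C n).qHi - (C n).qLo) :=
    fun n => (march hc (C n)).choose_spec
  set x : ℕ → ℝ := fun n => (C n).qHi with hx
  set L0 : ℝ := (C 0).qHi - (C 0).qLo with hL0
  have hL0pos : 0 ≤ L0 := by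
    have := (C 0).h1; have := (C 0).h2; rw [hL0]; linarith
  have hlen : ∀ n, (C n).qHi - (C n).qLo ≤ γ ^ n * L0 := by
    intro n
    induction n with
    | zero => simp [hL0]
    | succ n ih =>
        calc (C (n+1)).qHi - (C (n+1)).qLo ≤ γ * ((C n).qHi - (C n).qLo) := (hspec n).2.2.2
          _ ≤ γ * (γ ^ n * L0) := by nlinarith [gamma_pos]
          _ = γ ^ (n+1) * L0 := by ring
  have hdist : ∀ n, dist (x n) (x (n+1)) ≤ (γ * L0) * γ ^ n := by
    intro n
    have e1 : (C (n+1)).qLo ≤ x n := by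
      have := (C (n+1)).h1
      rw [hx]; simp only []
      rw [← (hspec n).2.1]
      exact this
    have e2 : x n < x (n+1) := (hspec n).2.2.1
    have e3 := hlen (n+1)
    rw [Real.dist_eq, abs_of_nonpos (by linarith)]
    have : x (n+1) - x n ≤ (C (n+1)).qHi - (C (n+1)).qLo := by
      rw [hx]; simp only []
      linarith [e1]
    calc -(x n - x (n+1)) = x (n+1) - x n := by ring
      _ ≤ (C (n+1)).qHi - (C (n+1)).qLo := this
      _ ≤ γ ^ (n+1) * L0 := e3
      _ = (γ * L0) * γ ^ n := by ring
  have hcauchy : CauchySeq x := cauchySeq_of_le_geometric γ (γ * L0) gamma_lt_one hdist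
  obtain ⟨xs, hxs⟩ := cauchySeq_tendsto_of_complete hcauchy
  -- flags alternate
  have hflag : ∀ n, (C n).flag = if Even n then s0.flag else !s0.flag := by
    intro n
    induction n with
    | zero =>
        show s0.flag = if Even 0 then s0.flag else !s0.flag
        simp
    | succ n ih =>
        rw [(hspec n).1, ih]
        rcases Nat.even_or_odd n with he | ho
        · rw [if_pos he, if_neg (by simp [Nat.even_add_one, he])]
        · have hne := Nat.not_even_iff_odd.2 ho
          rw [if_neg hne, if_pos (by simp [Nat.even_add_one, hne]), Bool.not_not]
  obtain ⟨eA, heA⟩ : ∃ e : ℕ, ∀ k, (C (2*k + e)).flag = false := by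
    cases hb : s0.flag
    · refine ⟨0, fun k => ?_⟩
      rw [hflag, if_pos (by simp [Nat.even_mul]), hb]
    · refine ⟨1, fun k => ?_⟩
      rw [hflag (2*k+1), if_neg (by simp [Nat.even_add_one, Nat.even_mul]), hb]
      simp
  obtain ⟨eB, heB⟩ : ∃ e : ℕ, ∀ k, (C (2*k + e)).flag = true := by
    cases hb : s0.flag
    · refine ⟨1, fun k => ?_⟩
      rw [hflag (2*k+1), if_neg (by simp [Nat.even_add_one, Nat.even_mul]), hb]
      simp
    · refine ⟨0, fun k => ?_⟩
      rw [hflag, if_pos (by simp [Nat.even_mul]), hb]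
  have hmemA : ∀ n, (C n).flag = false → x n ∈ Aset := by
    intro n h
    have := (C n).hq1
    rw [h, if_neg (by decide)] at this
    have e : x n = (C n).qHi := rfl
    rw [e]
    exact this.2
  have hmemB : ∀ n, (C n).flag = true → t - x n ∈ Aset := by
    intro n h
    have := (C n).hq1
    rw [h, if_pos rfl] at this
    exact this.2
  have htendA : Filter.Tendsto (fun k => 2*k + eA) Filter.atTop Filter.atTop := by
    apply Filter.tendsto_atTop_atTop.2
    intro b
    exact ⟨b, fun a ha => by omega⟩
  have htendB : Filter.Tendsto (fun k => 2*k + eB) Filter.atTop Filter.atTop := by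
    apply Filter.tendsto_atTop_atTop.2
    intro b
    exact ⟨b, fun a ha => by omega⟩
  have hsubA : Filter.Tendsto (fun k => x (2*k + eA)) Filter.atTop (nhds xs) :=
    hxs.comp htendA
  have hsubB : Filter.Tendsto (fun k => x (2*k + eB)) Filter.atTop (nhds xs) :=
    hxs.comp htendB
  have hxsIcm : xs ∈ Icm := by
    have : IsClosed Icm := isClosed_Icc
    exact this.mem_of_tendsto hsubA
      (Filter.Eventually.of_forall (fun k => Aset_sub_Icm (hmemA _ (heA k))))
  have hAxs : xs ∈ Aset := by
    by_contra hxsA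
    obtain ⟨wL, wR, gL, gR, gc1, gc2, gp1, gp2, gF3, gF2, gF4⟩ :=
      RES Good_nil (by rw [xlo_nil]; exact (mem_Icm.1 hxsIcm).1)
        (by rw [xhi_nil]; exact (mem_Icm.1 hxsIcm).2) hxsA
    have hε : 0 < min (xs - xhi wL) (xlo wR - xs) := lt_min (by linarith) (by linarith)
    obtain ⟨K, hK⟩ := (Metric.tendsto_atTop.1 hsubA) _ hε
    have hd := hK K (le_refl K)
    rw [Real.dist_eq, abs_lt] at hd
    have b1 : xhi wL < x (2*K + eA) := by
      have := hd.1
      have := min_le_left (xs - xhi wL) (xlo wR - xs)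
      linarith
    have b2 : x (2*K + eA) < xlo wR := by
      have := hd.2
      have := min_le_right (xs - xhi wL) (xlo wR - xs)
      linarith
    exact gF4 _ (hmemA _ (heA K)) ⟨b1, b2⟩
  have hBIcm : t - xs ∈ Icm := by
    have hcl : IsClosed Icm := isClosed_Icc
    have : Filter.Tendsto (fun k => t - x (2*k + eB)) Filter.atTop (nhds (t - xs)) :=
      hsubB.const_sub t
    exact hcl.mem_of_tendsto this
      (Filter.Eventually.of_forall (fun k => Aset_sub_Icm (hmemB _ (heB k))))
  have hBxs : t - xs ∈ Aset := by
    by_contra hxsB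
    obtain ⟨wL, wR, gL, gR, gc1, gc2, gp1, gp2, gF3, gF2, gF4⟩ :=
      RES Good_nil (by rw [xlo_nil]; exact (mem_Icm.1 hBIcm).1)
        (by rw [xhi_nil]; exact (mem_Icm.1 hBIcm).2) hxsB
    have hε : 0 < min ((t - xs) - xhi wL) (xlo wR - (t - xs)) :=
      lt_min (by linarith) (by linarith)
    have hsubB' : Filter.Tendsto (fun k => t - x (2*k + eB)) Filter.atTop (nhds (t - xs)) :=
      hsubB.const_sub t
    obtain ⟨K, hK⟩ := (Metric.tendsto_atTop.1 hsubB') _ hε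
    have hd := hK K (le_refl K)
    rw [Real.dist_eq, abs_lt] at hd
    have b1 : xhi wL < t - x (2*K + eB) := by
      have := hd.1
      have := min_le_left ((t - xs) - xhi wL) (xlo wR - (t - xs))
      linarith
    have b2 : t - x (2*K + eB) < xlo wR := by
      have := hd.2
      have := min_le_right ((t - xs) - xhi wL) (xlo wR - (t - xs))
      linarith
    exact gF4 _ (hmemB _ (heB K)) ⟨b1, b2⟩
  exact hc xs hAxs hBxs

-- ===== Section 7 : RCF digits of elements of Aset =====

def seqDrop (i : ℕ) (σ : ℕ → ℕ) : ℕ → ℕ := fun j => σ (i + j)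

lemma Gs_seqDrop {σ : ℕ → ℕ} (hσ : Gs σ) (i : ℕ) : Gs (seqDrop i σ) := fun j => hσ (i + j)

lemma seqDrop_tail (i : ℕ) (σ : ℕ → ℕ) :
    (fun j => seqDrop i σ (j+1)) = seqDrop (i+1) σ := by
  funext j
  show σ (i + (j+1)) = σ ((i+1) + j)
  rw [Nat.add_succ, Nat.succ_add]

lemma xval_drop {σ : ℕ → ℕ} (hσ : Gs σ) (i : ℕ) :
    xval (seqDrop i σ) = gg (σ i) (xval (seqDrop (i+1) σ)) := by
  have := xval_cons (Gs_seqDrop hσ i)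
  rw [seqDrop_tail] at this
  have e : seqDrop i σ 0 = σ i := by show σ (i + 0) = σ i; rw [Nat.add_zero]
  rw [e] at this
  exact this

lemma xval_drop_zero (σ : ℕ → ℕ) : xval (seqDrop 0 σ) = xval σ := by
  have e : seqDrop 0 σ = σ := by funext j; show σ (0 + j) = σ j; rw [Nat.zero_add]
  rw [e]

lemma gg_inv {a : ℕ} (ha : 1 ≤ a) {y : ℝ} (hy : 0 < y) :
    1 / gg a y = (a:ℝ) + y := by
  rw [gg, one_div_one_div]

lemma rcfX_succ (x : ℝ) (n : ℕ) : rcfX x (n+1) = 1 / (rcfX x n - ⌊rcfX x n⌋) := rfl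

lemma floor_int_add_Icm {k : ℤ} {y : ℝ} (hy : y ∈ Icm) : ⌊(k:ℝ) + y⌋ = k := by
  rw [Int.floor_intCast_add]
  have h0 : (0:ℝ) ≤ y := (Icm_pos hy).le
  have h1 : y < 1 := Icm_lt_one hy
  rw [Int.floor_eq_zero_iff.2 ⟨h0, h1⟩, add_zero]

lemma floor_nat_add_Icm {a : ℕ} {y : ℝ} (hy : y ∈ Icm) : ⌊(a:ℝ) + y⌋ = (a:ℤ) := by
  have : ((a:ℤ):ℝ) = (a:ℝ) := by push_cast; ring
  rw [← this]
  exact floor_int_add_Icm hy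

lemma rcf_tail {σ : ℕ → ℕ} (hσ : Gs σ) (k : ℤ) :
    ∀ i, rcfX ((k:ℝ) + xval σ) (i+1) = (σ i : ℝ) + xval (seqDrop (i+1) σ) := by
  intro i
  induction i with
  | zero =>
      rw [rcfX_succ]
      have e0 : rcfX ((k:ℝ) + xval σ) 0 = (k:ℝ) + xval σ := rfl
      rw [e0, floor_int_add_Icm (xval_mem_Icm hσ)]
      have e1 : (k:ℝ) + xval σ - k = xval σ := by ring
      rw [e1]
      have e2 : xval σ = gg (σ 0) (xval (seqDrop 1 σ)) := by
        conv_lhs => rw [← xval_drop_zero σ]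
        rw [xval_drop hσ 0]
      rw [e2, gg_inv (hσ 0).1 (Icm_pos (xval_mem_Icm (Gs_seqDrop hσ 1)))]
  | succ i ih =>
      rw [rcfX_succ, ih]
      have hmem := xval_mem_Icm (Gs_seqDrop hσ (i+1))
      rw [floor_nat_add_Icm hmem]
      have e1 : (σ i : ℝ) + xval (seqDrop (i+1) σ) - (σ i : ℤ) = xval (seqDrop (i+1) σ) := by
        push_cast; ring
      rw [e1, xval_drop hσ (i+1), gg_inv (hσ (i+1)).1
        (Icm_pos (xval_mem_Icm (Gs_seqDrop hσ (i+2))))]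

lemma mem_RCFset {σ : ℕ → ℕ} (hσ : Gs σ) (k : ℤ) :
    ((k:ℝ) + xval σ) ∈ RCFset 4 := by
  intro i hi _
  cases i with
  | zero => omega
  | succ i =>
      have hd : rcfDigit ((k:ℝ) + xval σ) (i+1) = (σ i : ℤ) := by
        rw [rcfDigit, rcf_tail hσ k i]
        exact floor_nat_add_Icm (xval_mem_Icm (Gs_seqDrop hσ (i+1)))
      rw [hd]
      exact_mod_cast (hσ i).2

end Hall

theorem rcf4_add_rcf4_eq_real (x : ℝ) :
    ∃ u v : ℝ, x = u + v ∧ u ∈ RCFset 4 ∧ v ∈ RCFset 4 := by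
  set b0 : ℤ := ⌈x - 2*Hall.MM⌉ with hb0
  set t : ℝ := x - b0 with ht
  have hub : t ≤ 2*Hall.MM := by
    have := Int.le_ceil (x - 2*Hall.MM)
    rw [ht, hb0]
    linarith
  have hlb : 2*Hall.mm ≤ t := by
    have h1 := Int.ceil_lt_add_one (x - 2*Hall.MM)
    have h2 : 2*Hall.mm ≤ 2*Hall.MM - 1 := by
      unfold Hall.mm Hall.MM
      nlinarith [Hall.sq2_lb]
    rw [ht, hb0]
    linarith
  obtain ⟨p, hpA, hpB⟩ := Hall.hall_exists hlb hub
  obtain ⟨σ, hσ, hpσ⟩ := hpA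
  obtain ⟨τ, hτ, hpτ⟩ := hpB
  refine ⟨(b0:ℝ) + p, t - p, by rw [ht]; ring, ?_, ?_⟩
  · rw [hpσ]
    exact Hall.mem_RCFset hσ b0
  · rw [hpτ]
    have e : Hall.xval τ = ((0:ℤ):ℝ) + Hall.xval τ := by push_cast; ring
    rw [e]
    exact Hall.mem_RCFset hτ 0
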